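/- arXiv:2509.13923 — 3 statements merged into one kernel-verified Lean document; each statement's English description precedes it below -/
import Mathlib

section
/- Let n, T ≥ 1, let Σ be a deterministic symmetric positive semidefinite n×n real matrix with positive semidefinite square root √Σ, and let X be the n×T random matrix whose T columns are i.i.d. copies of a rotationally invariant random vector ξ in ℝⁿ satisfying E[ξξᵀ] = Iₙ and E[‖ξ‖⁴] < ∞. Define E = (1/T)·√Σ X Xᵀ √Σ and γ = E[‖ξ‖⁴]/(n(n+2)). Then E[τ(E²)] = ((T−1)/T + 2γ/T)·τ(Σ²) + (nγ/T)·τ(Σ)², where τ(A) = (1/n)Tr(A) is the normalized trace. -/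
open MeasureTheory ProbabilityTheory Matrix

set_option linter.unusedSectionVars false
set_option linter.unusedVariables false
set_option maxHeartbeats 1000000


/-- Normalized trace `τ(A) = (1/n)·Tr(A)`. -/
noncomputable def tau (n : ℕ) (A : Matrix (Fin n) (Fin n) ℝ) : ℝ := (1 / (n : ℝ)) * A.trace

section AuxSpec

variable {Ω : Type*} [MeasurableSpace Ω] {μ : Measure Ω} [IsProbabilityMeasure μ] {n : ℕ}

lemma sum_pair_support {α M : Type*} [Fintype α] [DecidableEq α] [AddCommMonoid M]
    {i j : α} (hij : i ≠ j) (f : α → M) (hf : ∀ x, x ≠ i → x ≠ j → f x = 0) :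
    ∑ x, f x = f i + f j := by
  rw [← Finset.sum_subset (Finset.subset_univ ({i, j} : Finset α))]
  · rw [Finset.sum_insert (by simp [hij]), Finset.sum_singleton]
  · intro x _ hx
    simp only [Finset.mem_insert, Finset.mem_singleton] at hx
    push_neg at hx
    exact hf x hx.1 hx.2

lemma rot_integral (ξ : Ω → Fin n → ℝ) (hξmeas : Measurable ξ)
    (hrot : ∀ O : Matrix (Fin n) (Fin n) ℝ, Oᵀ * O = 1 →
      Measure.map (fun ω => O.mulVec (ξ ω)) μ = Measure.map ξ μ)
    (O : Matrix (Fin n) (Fin n) ℝ) (hO : Oᵀ * O = 1)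
    (g : (Fin n → ℝ) → ℝ) (hg : Measurable g) :
    ∫ ω, g (O.mulVec (ξ ω)) ∂μ = ∫ ω, g (ξ ω) ∂μ := by
  have hmeas2 : Measurable fun ω => O.mulVec (ξ ω) := by
    apply measurable_pi_lambda
    intro i
    simp only [Matrix.mulVec, dotProduct]
    exact Finset.measurable_sum _ fun j _ =>
      (measurable_const.mul ((measurable_pi_apply j).comp hξmeas))
  rw [← integral_map hmeas2.aemeasurable hg.aestronglyMeasurable,
    hrot O hO, integral_map hξmeas.aemeasurable hg.aestronglyMeasurable]

lemma perm_integral (ξ : Ω → Fin n → ℝ) (hξmeas : Measurable ξ)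
    (hrot : ∀ O : Matrix (Fin n) (Fin n) ℝ, Oᵀ * O = 1 →
      Measure.map (fun ω => O.mulVec (ξ ω)) μ = Measure.map ξ μ)
    (σ : Equiv.Perm (Fin n)) (g : (Fin n → ℝ) → ℝ) (hg : Measurable g) :
    ∫ ω, g (fun x => ξ ω (σ x)) ∂μ = ∫ ω, g (ξ ω) ∂μ := by
  set O : Matrix (Fin n) (Fin n) ℝ := Matrix.of fun a b => if σ a = b then 1 else 0 with hOdef
  have hO : Oᵀ * O = 1 := by
    ext a b
    simp only [Matrix.mul_apply, Matrix.transpose_apply, Matrix.of_apply, hOdef]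
    rw [Equiv.sum_comp σ (fun y => (if y = a then (1:ℝ) else 0) * if y = b then (1:ℝ) else 0)]
    simp only [ite_mul, one_mul, zero_mul, Finset.sum_ite_eq', Finset.mem_univ, if_true,
      Matrix.one_apply]
  have hmv : ∀ v : Fin n → ℝ, O.mulVec v = fun x => v (σ x) := by
    intro v; funext x
    simp only [Matrix.mulVec, dotProduct, Matrix.of_apply, hOdef, ite_mul, one_mul,
      zero_mul, Finset.sum_ite_eq, Finset.mem_univ, if_true]
  have key := rot_integral ξ hξmeas hrot O hO g hg
  simpa only [hmv] using key

lemma rot45_integral (ξ : Ω → Fin n → ℝ) (hξmeas : Measurable ξ)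
    (hrot : ∀ O : Matrix (Fin n) (Fin n) ℝ, Oᵀ * O = 1 →
      Measure.map (fun ω => O.mulVec (ξ ω)) μ = Measure.map ξ μ)
    {i j : Fin n} (hij : i ≠ j) (g : (Fin n → ℝ) → ℝ) (hg : Measurable g) :
    ∫ ω, g (fun x => if x = i then (Real.sqrt 2)⁻¹ * (ξ ω i + ξ ω j)
        else if x = j then (Real.sqrt 2)⁻¹ * (ξ ω i - ξ ω j) else ξ ω x) ∂μ
      = ∫ ω, g (ξ ω) ∂μ := by
  set c : ℝ := (Real.sqrt 2)⁻¹ with hcdef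
  have hc : c * c = 1 / 2 := by
    rw [hcdef, ← mul_inv, Real.mul_self_sqrt (by norm_num : (0:ℝ) ≤ 2)]
    norm_num
  set O : Matrix (Fin n) (Fin n) ℝ := Matrix.of fun a b =>
    if a = i then (if b = i then c else if b = j then c else 0)
    else if a = j then (if b = i then c else if b = j then -c else 0)
    else if a = b then 1 else 0 with hOdef
  have hOia : ∀ a, O i a = if a = i then c else if a = j then c else 0 := by
    intro a
    simp only [hOdef, Matrix.of_apply, eq_self_iff_true, if_true]
  have hOja : ∀ a, O j a = if a = i then c else if a = j then -c else 0 := by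
    intro a
    simp only [hOdef, Matrix.of_apply, if_neg (Ne.symm hij), eq_self_iff_true, if_true]
  have hOxa : ∀ x a, x ≠ i → x ≠ j → O x a = if x = a then 1 else 0 := by
    intro x a hxi hxj; simp only [hOdef, Matrix.of_apply, if_neg hxi, if_neg hxj]
  have hO : Oᵀ * O = 1 := by
    ext a b
    simp only [Matrix.mul_apply, Matrix.transpose_apply]
    have hpoint : ∀ x, O x a * O x b = (if x = a then (1:ℝ) else 0) * (if x = b then 1 else 0)
        + ((if x = i then O i a * O i b - (if a = i then (1:ℝ) else 0) * (if b = i then 1 else 0) else 0)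
        + (if x = j then O j a * O j b - (if a = j then (1:ℝ) else 0) * (if b = j then 1 else 0) else 0)) := by
      intro x
      by_cases hxi : x = i
      · subst hxi
        rw [if_pos (rfl : x = x), if_neg hij]
        have e1 : (if x = a then (1:ℝ) else 0) = if a = x then 1 else 0 := by
          rcases eq_or_ne x a with h | h
          · rw [if_pos h, if_pos h.symm]
          · rw [if_neg h, if_neg h.symm]
        have e2 : (if x = b then (1:ℝ) else 0) = if b = x then 1 else 0 := by
          rcases eq_or_ne x b with h | h
          · rw [if_pos h, if_pos h.symm]
          · rw [if_neg h, if_neg h.symm]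
        rw [e1, e2]
        ring
      · by_cases hxj : x = j
        · subst hxj
          rw [if_neg hxi, if_pos (rfl : x = x)]
          have e1 : (if x = a then (1:ℝ) else 0) = if a = x then 1 else 0 := by
            rcases eq_or_ne x a with h | h
            · rw [if_pos h, if_pos h.symm]
            · rw [if_neg h, if_neg h.symm]
          have e2 : (if x = b then (1:ℝ) else 0) = if b = x then 1 else 0 := by
            rcases eq_or_ne x b with h | h
            · rw [if_pos h, if_pos h.symm]
            · rw [if_neg h, if_neg h.symm]
          rw [e1, e2]
          ring
        · rw [if_neg hxi, if_neg hxj, hOxa x a hxi hxj, hOxa x b hxi hxj]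
          ring
    rw [Finset.sum_congr rfl fun x _ => hpoint x]
    rw [Finset.sum_add_distrib, Finset.sum_add_distrib]
    rw [Finset.sum_ite_eq' Finset.univ i, Finset.sum_ite_eq' Finset.univ j]
    simp only [Finset.mem_univ, if_true]
    have hsum1 : (∑ x : Fin n, (if x = a then (1:ℝ) else 0) * (if x = b then 1 else 0))
        = if a = b then 1 else 0 := by
      rw [Finset.sum_congr rfl (fun x _ => ite_mul (x = a) ((1:ℝ)) 0 _)]
      simp only [one_mul, zero_mul, Finset.sum_ite_eq', Finset.mem_univ, if_true]
    rw [hsum1, Matrix.one_apply]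
    have hkey : O i a * O i b + O j a * O j b
        = (if a = i then (1:ℝ) else 0) * (if b = i then 1 else 0)
          + (if a = j then (1:ℝ) else 0) * (if b = j then 1 else 0) := by
      rw [hOia, hOia, hOja, hOja]
      split_ifs <;>
        first
          | nlinarith [hc]
          | (exact absurd ((‹a = i›).symm.trans ‹a = j›) hij)
          | (exact absurd ((‹b = i›).symm.trans ‹b = j›) hij)
    linarith [hkey]
  have hmv : ∀ v : Fin n → ℝ, O.mulVec v = fun x =>
      if x = i then c * (v i + v j) else if x = j then c * (v i - v j) else v x := by
    intro v; funext x
    simp only [Matrix.mulVec, dotProduct]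
    by_cases hxi : x = i
    · subst hxi
      rw [if_pos (rfl : x = x)]
      rw [sum_pair_support hij (fun b => O x b * v b) (fun b hbi hbj => by
        show O x b * v b = 0
        rw [hOia, if_neg hbi, if_neg hbj, zero_mul])]
      show O x x * v x + O x j * v j = c * (v x + v j)
      rw [hOia, hOia, if_pos (rfl : x = x), if_neg (Ne.symm hij), if_pos (rfl : j = j)]
      ring
    · by_cases hxj : x = j
      · subst hxj
        rw [if_neg hxi, if_pos (rfl : x = x)]
        rw [sum_pair_support hij (fun b => O x b * v b) (fun b hbi hbj => by
          show O x b * v b = 0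
          rw [hOja, if_neg hbi, if_neg hbj, zero_mul])]
        show O x i * v i + O x x * v x = c * (v i - v x)
        rw [hOja, hOja, if_pos (rfl : i = i), if_neg hxi, if_pos (rfl : x = x)]
        ring
      · rw [if_neg hxi, if_neg hxj]
        rw [Finset.sum_congr rfl fun b _ => by rw [hOxa x b hxi hxj]]
        rw [Finset.sum_congr rfl (fun b _ => ite_mul (x = b) ((1:ℝ)) 0 _)]
        simp only [one_mul, zero_mul, Finset.sum_ite_eq, Finset.mem_univ, if_true]
  have key := rot_integral ξ hξmeas hrot O hO g hg
  simpa only [hmv] using key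

lemma integrable4 (ξ : Ω → Fin n → ℝ) (hξmeas : Measurable ξ)
    (hmom4 : Integrable (fun ω => (∑ i, ξ ω i ^ 2) ^ 2) μ) (i j k l : Fin n) :
    Integrable (fun ω => ξ ω i * ξ ω j * ξ ω k * ξ ω l) μ := by
  have key : ∀ a b : ℝ, |a * b| ≤ (a ^ 2 + b ^ 2) / 2 := by
    intro a b
    rw [abs_mul]
    nlinarith [sq_nonneg (|a| - |b|), sq_abs a, sq_abs b, abs_nonneg a, abs_nonneg b]
  have hmeas : Measurable fun ω => ξ ω i * ξ ω j * ξ ω k * ξ ω l := by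
    have m : ∀ a : Fin n, Measurable fun ω => ξ ω a := fun a => (measurable_pi_apply a).comp hξmeas
    exact (((m i).mul (m j)).mul (m k)).mul (m l)
  refine hmom4.mono hmeas.aestronglyMeasurable ?_
  filter_upwards with ω
  have hs : (0:ℝ) ≤ ∑ x, ξ ω x ^ 2 := Finset.sum_nonneg fun _ _ => sq_nonneg _
  have hb : ∀ a : Fin n, ξ ω a ^ 2 ≤ ∑ x, ξ ω x ^ 2 := fun a =>
    Finset.single_le_sum (f := fun x => ξ ω x ^ 2) (fun _ _ => sq_nonneg _) (Finset.mem_univ a)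
  have h1 : |ξ ω i * ξ ω j| ≤ ∑ x, ξ ω x ^ 2 := le_trans (key _ _) (by linarith [hb i, hb j])
  have h2 : |ξ ω k * ξ ω l| ≤ ∑ x, ξ ω x ^ 2 := le_trans (key _ _) (by linarith [hb k, hb l])
  simp only [Real.norm_eq_abs]
  calc |ξ ω i * ξ ω j * ξ ω k * ξ ω l| = |ξ ω i * ξ ω j| * |ξ ω k * ξ ω l| := by
        rw [← abs_mul]; ring_nf
    _ ≤ (∑ x, ξ ω x ^ 2) * (∑ x, ξ ω x ^ 2) :=
        mul_le_mul h1 h2 (abs_nonneg _) hs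
    _ ≤ |(∑ x, ξ ω x ^ 2) ^ 2| := by rw [abs_of_nonneg (by positivity)]; nlinarith [hs]

lemma integrable2 (ξ : Ω → Fin n → ℝ) (hξmeas : Measurable ξ)
    (hmom4 : Integrable (fun ω => (∑ i, ξ ω i ^ 2) ^ 2) μ) (i j : Fin n) :
    Integrable (fun ω => ξ ω i * ξ ω j) μ := by
  have key : ∀ a b : ℝ, |a * b| ≤ (a ^ 2 + b ^ 2) / 2 := by
    intro a b
    rw [abs_mul]
    nlinarith [sq_nonneg (|a| - |b|), sq_abs a, sq_abs b, abs_nonneg a, abs_nonneg b]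
  have hmeas : Measurable fun ω => ξ ω i * ξ ω j := by
    have m : ∀ a : Fin n, Measurable fun ω => ξ ω a := fun a => (measurable_pi_apply a).comp hξmeas
    exact (m i).mul (m j)
  refine (hmom4.add (integrable_const 1)).mono hmeas.aestronglyMeasurable ?_
  filter_upwards with ω
  have hs : (0:ℝ) ≤ ∑ x, ξ ω x ^ 2 := Finset.sum_nonneg fun _ _ => sq_nonneg _
  have hb : ∀ a : Fin n, ξ ω a ^ 2 ≤ ∑ x, ξ ω x ^ 2 := fun a =>
    Finset.single_le_sum (f := fun x => ξ ω x ^ 2) (fun _ _ => sq_nonneg _) (Finset.mem_univ a)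
  have h1 : |ξ ω i * ξ ω j| ≤ ∑ x, ξ ω x ^ 2 := le_trans (key _ _) (by linarith [hb i, hb j])
  simp only [Real.norm_eq_abs]
  simp only [Pi.add_apply]
  rw [abs_of_nonneg (by positivity : (0:ℝ) ≤ (∑ x, ξ ω x ^ 2) ^ 2 + 1)]
  nlinarith [hs]

lemma J_odd_zero (ξ : Ω → Fin n → ℝ) (hξmeas : Measurable ξ)
    (hrot : ∀ O : Matrix (Fin n) (Fin n) ℝ, Oᵀ * O = 1 →
      Measure.map (fun ω => O.mulVec (ξ ω)) μ = Measure.map ξ μ)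
    (a i j k l : Fin n)
    (h : ((if i = a then 1 else 0) + (if j = a then 1 else 0) + (if k = a then 1 else 0)
      + (if l = a then 1 else 0) : ℕ) % 2 = 1) :
    ∫ ω, ξ ω i * ξ ω j * ξ ω k * ξ ω l ∂μ = 0 := by
  set ε : Fin n → ℝ := fun x => if x = a then -1 else 1 with hε
  have hO : (Matrix.diagonal ε)ᵀ * Matrix.diagonal ε = 1 := by
    rw [Matrix.diagonal_transpose, Matrix.diagonal_mul_diagonal]
    rw [show (fun x => ε x * ε x) = fun _ => (1:ℝ) from funext fun x => by
      simp only [hε]; split_ifs <;> norm_num]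
    exact Matrix.diagonal_one
  have hg : Measurable fun v : Fin n → ℝ => v i * v j * v k * v l := by
    exact (((measurable_pi_apply i).mul (measurable_pi_apply j)).mul
      (measurable_pi_apply k)).mul (measurable_pi_apply l)
  have key := rot_integral ξ hξmeas hrot _ hO _ hg
  simp only [Matrix.mulVec_diagonal] at key
  have hsign : ε i * ε j * ε k * ε l = -1 := by
    simp only [hε]
    split_ifs at h ⊢ <;> norm_num at h ⊢
  have heq : ∫ ω, ε i * ξ ω i * (ε j * ξ ω j) * (ε k * ξ ω k) * (ε l * ξ ω l) ∂μ
      = (ε i * ε j * ε k * ε l) * ∫ ω, ξ ω i * ξ ω j * ξ ω k * ξ ω l ∂μ := by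
    rw [← integral_const_mul]
    congr 1; funext ω; ring
  rw [heq, hsign] at key
  linarith



lemma quartic_ratio (ξ : Ω → Fin n → ℝ) (hξmeas : Measurable ξ)
    (hrot : ∀ O : Matrix (Fin n) (Fin n) ℝ, Oᵀ * O = 1 →
      Measure.map (fun ω => O.mulVec (ξ ω)) μ = Measure.map ξ μ)
    (hmom4 : Integrable (fun ω => (∑ i, ξ ω i ^ 2) ^ 2) μ)
    {i j : Fin n} (hij : i ≠ j) :
    ∫ ω, ξ ω i * ξ ω i * ξ ω i * ξ ω i ∂μ
      = 3 * ∫ ω, ξ ω i * ξ ω i * ξ ω j * ξ ω j ∂μ := by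
  set c : ℝ := (Real.sqrt 2)⁻¹ with hcdef
  have hc : c * c = 1 / 2 := by
    rw [hcdef, ← mul_inv, Real.mul_self_sqrt (by norm_num : (0:ℝ) ≤ 2)]
    norm_num
  have mp : ∀ a : Fin n, Measurable fun v : Fin n → ℝ => v a := fun a => measurable_pi_apply a
  have hg : Measurable fun v : Fin n → ℝ => v i * v i * v i * v i :=
    (((mp i).mul (mp i)).mul (mp i)).mul (mp i)
  have h45 := rot45_integral ξ hξmeas hrot hij (fun v => v i * v i * v i * v i) hg
  simp only [eq_self_iff_true, if_true] at h45
  have hexp : (fun ω => c * (ξ ω i + ξ ω j) * (c * (ξ ω i + ξ ω j)) * (c * (ξ ω i + ξ ω j))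
        * (c * (ξ ω i + ξ ω j)))
      = fun ω => (1/4 : ℝ) * (ξ ω i * ξ ω i * ξ ω i * ξ ω i)
        + ((ξ ω i * ξ ω i * ξ ω i * ξ ω j)
        + ((3/2 : ℝ) * (ξ ω i * ξ ω i * ξ ω j * ξ ω j)
        + ((ξ ω i * ξ ω j * ξ ω j * ξ ω j)
        + (1/4 : ℝ) * (ξ ω j * ξ ω j * ξ ω j * ξ ω j)))) := by
    funext ω
    linear_combination (c * c + 1 / 2) * (ξ ω i + ξ ω j) ^ 4 * hc
  rw [hexp] at h45
  have i1 := (integrable4 ξ hξmeas hmom4 i i i i).const_mul (1/4 : ℝ)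
  have i2 := integrable4 ξ hξmeas hmom4 i i i j
  have i3 := (integrable4 ξ hξmeas hmom4 i i j j).const_mul (3/2 : ℝ)
  have i4 := integrable4 ξ hξmeas hmom4 i j j j
  have i5 := (integrable4 ξ hξmeas hmom4 j j j j).const_mul (1/4 : ℝ)
  have E1 := integral_add i1 (i2.add (i3.add (i4.add i5)))
  have E2 := integral_add i2 (i3.add (i4.add i5))
  have E3 := integral_add i3 (i4.add i5)
  have E4 := integral_add i4 i5
  simp only [Pi.add_apply] at E1 E2 E3 E4
  rw [E1, E2, E3, E4, integral_const_mul, integral_const_mul, integral_const_mul] at h45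
  have z2 : ∫ ω, ξ ω i * ξ ω i * ξ ω i * ξ ω j ∂μ = 0 := by
    apply J_odd_zero ξ hξmeas hrot j i i i j
    simp [hij]
  have z4 : ∫ ω, ξ ω i * ξ ω j * ξ ω j * ξ ω j ∂μ = 0 := by
    apply J_odd_zero ξ hξmeas hrot i i j j j
    simp [Ne.symm hij]
  have hp : ∫ ω, ξ ω j * ξ ω j * ξ ω j * ξ ω j ∂μ = ∫ ω, ξ ω i * ξ ω i * ξ ω i * ξ ω i ∂μ := by
    have hgm : Measurable fun v : Fin n → ℝ => v i * v i * v i * v i := hg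
    have := perm_integral ξ hξmeas hrot (Equiv.swap i j) _ hgm
    simpa [Equiv.swap_apply_left] using this
  rw [z2, z4, hp] at h45
  linarith

lemma mixed_perm (ξ : Ω → Fin n → ℝ) (hξmeas : Measurable ξ)
    (hrot : ∀ O : Matrix (Fin n) (Fin n) ℝ, Oᵀ * O = 1 →
      Measure.map (fun ω => O.mulVec (ξ ω)) μ = Measure.map ξ μ)
    {i j k l : Fin n} (hij : i ≠ j) (hkl : k ≠ l) :
    ∫ ω, ξ ω k * ξ ω k * ξ ω l * ξ ω l ∂μ = ∫ ω, ξ ω i * ξ ω i * ξ ω j * ξ ω j ∂μ := by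
  have mp : ∀ a : Fin n, Measurable fun v : Fin n → ℝ => v a := fun a => measurable_pi_apply a
  set σ := (Equiv.swap i k).trans (Equiv.swap ((Equiv.swap i k) j) l) with hσ
  have hne : k ≠ (Equiv.swap i k) j := by
    intro h
    exact hij (((Equiv.swap i k).injective (h.symm.trans (Equiv.swap_apply_left i k).symm)).symm)
  have hσi : σ i = k := by
    simp only [hσ, Equiv.trans_apply, Equiv.swap_apply_left]
    exact Equiv.swap_apply_of_ne_of_ne hne hkl
  have hσj : σ j = l := by
    simp only [hσ, Equiv.trans_apply]
    exact Equiv.swap_apply_left _ _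
  have := perm_integral ξ hξmeas hrot σ (fun v => v i * v i * v j * v j)
    ((((mp i).mul (mp i)).mul (mp j)).mul (mp j))
  simpa [hσi, hσj] using this

lemma moments_key (ξ : Ω → Fin n → ℝ) (hξmeas : Measurable ξ)
    (hrot : ∀ O : Matrix (Fin n) (Fin n) ℝ, Oᵀ * O = 1 →
      Measure.map (fun ω => O.mulVec (ξ ω)) μ = Measure.map ξ μ)
    (hmom4 : Integrable (fun ω => (∑ i, ξ ω i ^ 2) ^ 2) μ) (hn : 1 ≤ n) :
    (∀ i : Fin n, ∫ ω, ξ ω i * ξ ω i * ξ ω i * ξ ω i ∂μ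
        = 3 * ((∫ ω, (∑ x, ξ ω x ^ 2) ^ 2 ∂μ) / ((n:ℝ) * ((n:ℝ) + 2)))) ∧
    (∀ i j : Fin n, i ≠ j → ∫ ω, ξ ω i * ξ ω i * ξ ω j * ξ ω j ∂μ
        = (∫ ω, (∑ x, ξ ω x ^ 2) ^ 2 ∂μ) / ((n:ℝ) * ((n:ℝ) + 2))) := by
  have hM4 : ∫ ω, (∑ x, ξ ω x ^ 2) ^ 2 ∂μ
      = ∑ p : Fin n × Fin n, ∫ ω, ξ ω p.1 * ξ ω p.1 * ξ ω p.2 * ξ ω p.2 ∂μ := by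
    have hpt : (fun ω => (∑ x, ξ ω x ^ 2) ^ 2)
        = fun ω => ∑ p : Fin n × Fin n, ξ ω p.1 * ξ ω p.1 * ξ ω p.2 * ξ ω p.2 := by
      funext ω
      rw [Fintype.sum_prod_type, sq, Finset.sum_mul_sum]
      exact Finset.sum_congr rfl fun a _ => Finset.sum_congr rfl fun b _ => by ring
    rw [hpt]
    exact integral_finset_sum Finset.univ fun p _ => integrable4 ξ hξmeas hmom4 p.1 p.1 p.2 p.2
  by_cases hn2 : 2 ≤ n
  · have h01 : (⟨0, by omega⟩ : Fin n) ≠ ⟨1, by omega⟩ := by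
      simp [Fin.ext_iff]
    set b := ∫ ω, ξ ω ⟨0, by omega⟩ * ξ ω ⟨0, by omega⟩ * ξ ω ⟨1, by omega⟩ * ξ ω ⟨1, by omega⟩ ∂μ
      with hb
    have hoff : ∀ i j : Fin n, i ≠ j → ∫ ω, ξ ω i * ξ ω i * ξ ω j * ξ ω j ∂μ = b :=
      fun i j hij => mixed_perm ξ hξmeas hrot h01 hij
    have hdiag : ∀ i : Fin n, ∫ ω, ξ ω i * ξ ω i * ξ ω i * ξ ω i ∂μ = 3 * b := by
      intro i
      have hex : ∃ j, i ≠ j := by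
        by_cases hi : i = ⟨0, by omega⟩
        · exact ⟨⟨1, by omega⟩, by rw [hi]; exact h01⟩
        · exact ⟨⟨0, by omega⟩, hi⟩
      obtain ⟨j, hij⟩ := hex
      rw [quartic_ratio ξ hξmeas hrot hmom4 hij, hoff i j hij]
    have hcard : (Finset.univ : Finset (Fin n × Fin n)).card = n * n := by
      simp [Finset.card_univ]
    have hsum : ∑ p : Fin n × Fin n, ∫ ω, ξ ω p.1 * ξ ω p.1 * ξ ω p.2 * ξ ω p.2 ∂μ
        = (n:ℝ) * (3 * b) + ((n:ℝ) * n - n) * b := by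
      have hterm : ∀ p : Fin n × Fin n, ∫ ω, ξ ω p.1 * ξ ω p.1 * ξ ω p.2 * ξ ω p.2 ∂μ
          = b + if p.1 = p.2 then (3 * b - b) else 0 := by
        intro p
        by_cases h : p.1 = p.2
        · rw [if_pos h, ← h, hdiag p.1]; ring
        · rw [if_neg h, hoff p.1 p.2 h]; ring
      rw [Finset.sum_congr rfl fun p _ => hterm p, Finset.sum_add_distrib, Finset.sum_const,
        hcard]
      have hite : ∑ p : Fin n × Fin n, (if p.1 = p.2 then (3 * b - b) else (0:ℝ))
          = (n:ℝ) * (3 * b - b) := by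
        rw [Fintype.sum_prod_type]
        have : ∀ x : Fin n, (∑ y : Fin n, if x = y then (3 * b - b) else (0:ℝ)) = 3 * b - b := by
          intro x
          rw [Finset.sum_ite_eq]
          simp
        rw [Finset.sum_congr rfl fun x _ => this x, Finset.sum_const, Finset.card_univ,
          Fintype.card_fin, nsmul_eq_mul]
      rw [hite, nsmul_eq_mul]
      push_cast
      ring
    have hpos : (0:ℝ) < (n:ℝ) := by exact_mod_cast Nat.pos_of_ne_zero (by omega)
    have hM4' : ∫ ω, (∑ x, ξ ω x ^ 2) ^ 2 ∂μ = ((n:ℝ) * ((n:ℝ) + 2)) * b := by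
      rw [hM4, hsum]; ring
    constructor
    · intro i
      rw [hdiag i, hM4']
      field_simp
    · intro i j hij
      rw [hoff i j hij, hM4']
      field_simp
  · have hn1 : n = 1 := by omega
    subst hn1
    constructor
    · intro i
      have hi : i = ⟨0, by omega⟩ := Subsingleton.elim _ _
      rw [hM4]
      rw [show (∑ p : Fin 1 × Fin 1, ∫ ω, ξ ω p.1 * ξ ω p.1 * ξ ω p.2 * ξ ω p.2 ∂μ)
          = ∫ ω, ξ ω ⟨0, by omega⟩ * ξ ω ⟨0, by omega⟩ * ξ ω ⟨0, by omega⟩ * ξ ω ⟨0, by omega⟩ ∂μ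
        from by rw [Fintype.sum_prod_type, Fin.sum_univ_one, Fin.sum_univ_one]; norm_num]
      rw [hi]
      push_cast
      ring
    · intro i j hij
      exact absurd (Subsingleton.elim i j) hij

lemma J_master (ξ : Ω → Fin n → ℝ) (hξmeas : Measurable ξ)
    (hrot : ∀ O : Matrix (Fin n) (Fin n) ℝ, Oᵀ * O = 1 →
      Measure.map (fun ω => O.mulVec (ξ ω)) μ = Measure.map ξ μ)
    (hmom4 : Integrable (fun ω => (∑ i, ξ ω i ^ 2) ^ 2) μ) (hn : 1 ≤ n)
    (i j k l : Fin n) :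
    ∫ ω, ξ ω i * ξ ω j * ξ ω k * ξ ω l ∂μ
      = ((∫ ω, (∑ x, ξ ω x ^ 2) ^ 2 ∂μ) / ((n:ℝ) * ((n:ℝ) + 2)))
        * ((if i = j then 1 else 0) * (if k = l then 1 else 0)
          + (if i = k then 1 else 0) * (if j = l then 1 else 0)
          + (if i = l then 1 else 0) * (if j = k then 1 else 0)) := by
  obtain ⟨key1, key2⟩ := moments_key ξ hξmeas hrot hmom4 hn
  set m : ℝ := (∫ ω, (∑ x, ξ ω x ^ 2) ^ 2 ∂μ) / ((n:ℝ) * ((n:ℝ) + 2)) with hm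
  by_cases hij : i = j
  · subst hij
    by_cases hkl : k = l
    · subst hkl
      by_cases hik : i = k
      · subst hik
        rw [key1 i]
        simp
        ring
      · rw [key2 i k hik]
        simp [hik]
    · rw [J_odd_zero ξ hξmeas hrot k i i k l (by
        split_ifs <;> simp_all)]
      by_cases hik : i = k
      · have hil : ¬ i = l := fun h => hkl (hik.symm.trans h)
        simp [hkl, hik, hil]
      · simp [hkl, hik]
  · by_cases hik : i = k
    · subst hik
      by_cases hjl : j = l
      · subst hjl
        rw [show (fun ω => ξ ω i * ξ ω j * ξ ω i * ξ ω j) = fun ω => ξ ω i * ξ ω i * ξ ω j * ξ ω j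
          from funext fun ω => by ring, key2 i j hij]
        simp [hij, Ne.symm hij]
      · rw [J_odd_zero ξ hξmeas hrot j i j i l (by
          split_ifs <;> simp_all)]
        simp [hij, hjl, Ne.symm hij]
    · by_cases hil : i = l
      · subst hil
        by_cases hjk : j = k
        · subst hjk
          rw [show (fun ω => ξ ω i * ξ ω j * ξ ω j * ξ ω i) = fun ω => ξ ω i * ξ ω i * ξ ω j * ξ ω j
            from funext fun ω => by ring, key2 i j hij]
          simp [hij, hik, Ne.symm hij]
        · rw [J_odd_zero ξ hξmeas hrot j i j k i (by
            split_ifs <;> simp_all)]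
          simp [hij, hik, hjk]
      · rw [J_odd_zero ξ hξmeas hrot i i j k l (by
          split_ifs <;> simp_all)]
        simp [hij, hik, hil]

lemma sum_delta_right (f : Fin n → ℝ) (a : Fin n) :
    ∑ d, f d * (if a = d then 1 else 0) = f a := by
  simp [mul_ite, Finset.sum_ite_eq]

lemma quartic_form (ξ : Ω → Fin n → ℝ) (hξmeas : Measurable ξ)
    (hrot : ∀ O : Matrix (Fin n) (Fin n) ℝ, Oᵀ * O = 1 →
      Measure.map (fun ω => O.mulVec (ξ ω)) μ = Measure.map ξ μ)
    (hmom4 : Integrable (fun ω => (∑ i, ξ ω i ^ 2) ^ 2) μ) (hn : 1 ≤ n)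
    (S : Matrix (Fin n) (Fin n) ℝ) (hsymm : ∀ a b, S a b = S b a) :
    ∫ ω, (∑ a, ∑ b, ξ ω a * S a b * ξ ω b) ^ 2 ∂μ
      = ((∫ ω, (∑ x, ξ ω x ^ 2) ^ 2 ∂μ) / ((n:ℝ) * ((n:ℝ) + 2)))
        * (2 * (∑ a, ∑ b, S a b ^ 2) + (∑ a, S a a) ^ 2) := by
  set m : ℝ := (∫ ω, (∑ x, ξ ω x ^ 2) ^ 2 ∂μ) / ((n:ℝ) * ((n:ℝ) + 2)) with hm
  have hpt : (fun ω => (∑ a, ∑ b, ξ ω a * S a b * ξ ω b) ^ 2)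
      = fun ω => ∑ p : (Fin n × Fin n) × Fin n × Fin n,
        (S p.1.1 p.1.2 * S p.2.1 p.2.2) * (ξ ω p.1.1 * ξ ω p.1.2 * ξ ω p.2.1 * ξ ω p.2.2) := by
    funext ω
    calc (∑ a, ∑ b, ξ ω a * S a b * ξ ω b) ^ 2
        = (∑ q : Fin n × Fin n, ξ ω q.1 * S q.1 q.2 * ξ ω q.2) ^ 2 := by
          rw [Fintype.sum_prod_type]
      _ = ∑ q : Fin n × Fin n, ∑ r : Fin n × Fin n,
            (ξ ω q.1 * S q.1 q.2 * ξ ω q.2) * (ξ ω r.1 * S r.1 r.2 * ξ ω r.2) := by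
          rw [sq, Finset.sum_mul_sum]
      _ = _ := by
          conv_rhs => rw [Fintype.sum_prod_type]
          exact Finset.sum_congr rfl fun q _ => Finset.sum_congr rfl fun r _ => by ring
  rw [hpt, integral_finset_sum Finset.univ (fun p _ =>
    (integrable4 ξ hξmeas hmom4 p.1.1 p.1.2 p.2.1 p.2.2).const_mul _)]
  have hint : ∀ p : (Fin n × Fin n) × Fin n × Fin n,
      ∫ ω, (S p.1.1 p.1.2 * S p.2.1 p.2.2) * (ξ ω p.1.1 * ξ ω p.1.2 * ξ ω p.2.1 * ξ ω p.2.2) ∂μ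
      = (S p.1.1 p.1.2 * S p.2.1 p.2.2) * (m * ((if p.1.1 = p.1.2 then 1 else 0) * (if p.2.1 = p.2.2 then 1 else 0)
        + (if p.1.1 = p.2.1 then 1 else 0) * (if p.1.2 = p.2.2 then 1 else 0)
        + (if p.1.1 = p.2.2 then 1 else 0) * (if p.1.2 = p.2.1 then 1 else 0))) := by
    intro p
    rw [integral_const_mul, J_master ξ hξmeas hrot hmom4 hn]
  rw [Finset.sum_congr rfl fun p _ => hint p]
  have hq : ∑ q : Fin n × Fin n, S q.1 q.2 * (if q.1 = q.2 then (1:ℝ) else 0) = ∑ a, S a a := by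
    rw [Fintype.sum_prod_type]
    simp [mul_ite, Finset.sum_ite_eq]
  have e1 : ∑ p : (Fin n × Fin n) × Fin n × Fin n, (S p.1.1 p.1.2 * S p.2.1 p.2.2)
      * ((if p.1.1 = p.1.2 then (1:ℝ) else 0) * (if p.2.1 = p.2.2 then 1 else 0))
      = (∑ a, S a a) ^ 2 := by
    rw [Fintype.sum_prod_type]
    rw [Finset.sum_congr rfl fun q (_ : q ∈ Finset.univ) => Finset.sum_congr rfl
      fun r (_ : r ∈ Finset.univ) => show (S q.1 q.2 * S r.1 r.2)
        * ((if q.1 = q.2 then (1:ℝ) else 0) * (if r.1 = r.2 then 1 else 0))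
        = (S q.1 q.2 * (if q.1 = q.2 then (1:ℝ) else 0)) * (S r.1 r.2 * (if r.1 = r.2 then 1 else 0))
      from by ring]
    rw [← Finset.sum_mul_sum, hq, sq]
  have e2 : ∑ p : (Fin n × Fin n) × Fin n × Fin n, (S p.1.1 p.1.2 * S p.2.1 p.2.2)
      * ((if p.1.1 = p.2.1 then (1:ℝ) else 0) * (if p.1.2 = p.2.2 then 1 else 0))
      = ∑ a, ∑ b, S a b ^ 2 := by
    rw [Fintype.sum_prod_type]
    have hinner : ∀ q : Fin n × Fin n, (∑ r : Fin n × Fin n, (S q.1 q.2 * S r.1 r.2)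
        * ((if q.1 = r.1 then (1:ℝ) else 0) * (if q.2 = r.2 then 1 else 0)))
        = S q.1 q.2 ^ 2 := by
      intro q
      rw [Fintype.sum_prod_type]
      have hc : ∀ c : Fin n, (∑ d : Fin n, (S q.1 q.2 * S c d)
          * ((if q.1 = c then (1:ℝ) else 0) * (if q.2 = d then 1 else 0)))
          = (S q.1 q.2 * S c q.2) * (if q.1 = c then 1 else 0) := by
        intro c
        rw [Finset.sum_congr rfl fun d (_ : d ∈ Finset.univ) => show (S q.1 q.2 * S c d)
            * ((if q.1 = c then (1:ℝ) else 0) * (if q.2 = d then 1 else 0))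
            = (S q.1 q.2 * S c d * (if q.1 = c then (1:ℝ) else 0)) * (if q.2 = d then 1 else 0)
          from by ring]
        rw [sum_delta_right (fun d => S q.1 q.2 * S c d * (if q.1 = c then (1:ℝ) else 0)) q.2]
      rw [Finset.sum_congr rfl fun c _ => hc c]
      rw [Finset.sum_congr rfl fun c (_ : c ∈ Finset.univ) => show (S q.1 q.2 * S c q.2)
          * (if q.1 = c then (1:ℝ) else 0)
          = (fun c => S q.1 q.2 * S c q.2) c * (if q.1 = c then (1:ℝ) else 0) from rfl]
      rw [sum_delta_right (fun c => S q.1 q.2 * S c q.2) q.1]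
      try ring
    rw [Finset.sum_congr rfl fun q _ => hinner q, Fintype.sum_prod_type]
  have e3 : ∑ p : (Fin n × Fin n) × Fin n × Fin n, (S p.1.1 p.1.2 * S p.2.1 p.2.2)
      * ((if p.1.1 = p.2.2 then (1:ℝ) else 0) * (if p.1.2 = p.2.1 then 1 else 0))
      = ∑ a, ∑ b, S a b ^ 2 := by
    rw [Fintype.sum_prod_type]
    have hinner : ∀ q : Fin n × Fin n, (∑ r : Fin n × Fin n, (S q.1 q.2 * S r.1 r.2)
        * ((if q.1 = r.2 then (1:ℝ) else 0) * (if q.2 = r.1 then 1 else 0)))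
        = S q.1 q.2 ^ 2 := by
      intro q
      rw [Fintype.sum_prod_type]
      have hc : ∀ c : Fin n, (∑ d : Fin n, (S q.1 q.2 * S c d)
          * ((if q.1 = d then (1:ℝ) else 0) * (if q.2 = c then 1 else 0)))
          = (S q.1 q.2 * S c q.1) * (if q.2 = c then 1 else 0) := by
        intro c
        rw [Finset.sum_congr rfl fun d (_ : d ∈ Finset.univ) => show (S q.1 q.2 * S c d)
            * ((if q.1 = d then (1:ℝ) else 0) * (if q.2 = c then 1 else 0))
            = (S q.1 q.2 * S c d * (if q.2 = c then (1:ℝ) else 0)) * (if q.1 = d then 1 else 0)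
          from by ring]
        rw [sum_delta_right (fun d => S q.1 q.2 * S c d * (if q.2 = c then (1:ℝ) else 0)) q.1]
        try ring
      rw [Finset.sum_congr rfl fun c _ => hc c]
      rw [Finset.sum_congr rfl fun c (_ : c ∈ Finset.univ) => show (S q.1 q.2 * S c q.1)
          * (if q.2 = c then (1:ℝ) else 0)
          = (fun c => S q.1 q.2 * S c q.1) c * (if q.2 = c then (1:ℝ) else 0) from rfl]
      rw [sum_delta_right (fun c => S q.1 q.2 * S c q.1) q.2]
      rw [hsymm q.2 q.1]
      try ring
    rw [Finset.sum_congr rfl fun q _ => hinner q, Fintype.sum_prod_type]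
  calc ∑ p : (Fin n × Fin n) × Fin n × Fin n, (S p.1.1 p.1.2 * S p.2.1 p.2.2)
        * (m * ((if p.1.1 = p.1.2 then 1 else 0) * (if p.2.1 = p.2.2 then 1 else 0)
          + (if p.1.1 = p.2.1 then 1 else 0) * (if p.1.2 = p.2.2 then 1 else 0)
          + (if p.1.1 = p.2.2 then 1 else 0) * (if p.1.2 = p.2.1 then 1 else 0)))
      = m * (∑ p : (Fin n × Fin n) × Fin n × Fin n, (S p.1.1 p.1.2 * S p.2.1 p.2.2)
          * ((if p.1.1 = p.1.2 then 1 else 0) * (if p.2.1 = p.2.2 then 1 else 0))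
        + (∑ p : (Fin n × Fin n) × Fin n × Fin n, (S p.1.1 p.1.2 * S p.2.1 p.2.2)
          * ((if p.1.1 = p.2.1 then 1 else 0) * (if p.1.2 = p.2.2 then 1 else 0))
        + ∑ p : (Fin n × Fin n) × Fin n × Fin n, (S p.1.1 p.1.2 * S p.2.1 p.2.2)
          * ((if p.1.1 = p.2.2 then 1 else 0) * (if p.1.2 = p.2.1 then 1 else 0)))) := by
        rw [← Finset.sum_add_distrib, ← Finset.sum_add_distrib, Finset.mul_sum]
        exact Finset.sum_congr rfl fun p _ => by ring
    _ = m * (2 * (∑ a, ∑ b, S a b ^ 2) + (∑ a, S a a) ^ 2) := by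
        rw [e1, e2, e3]; ring

lemma sumE2' {n : ℕ} (S : Matrix (Fin n) (Fin n) ℝ) :
    ∑ p : (Fin n × Fin n) × Fin n × Fin n, (S p.1.1 p.1.2 * S p.2.1 p.2.2)
      * ((if p.1.1 = p.2.1 then (1:ℝ) else 0) * (if p.1.2 = p.2.2 then 1 else 0))
      = ∑ a, ∑ b, S a b ^ 2 := by
  rw [Fintype.sum_prod_type]
  have hinner : ∀ q : Fin n × Fin n, (∑ r : Fin n × Fin n, (S q.1 q.2 * S r.1 r.2)
      * ((if q.1 = r.1 then (1:ℝ) else 0) * (if q.2 = r.2 then 1 else 0)))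
      = S q.1 q.2 ^ 2 := by
    intro q
    rw [Fintype.sum_prod_type]
    have hc : ∀ c : Fin n, (∑ d : Fin n, (S q.1 q.2 * S c d)
        * ((if q.1 = c then (1:ℝ) else 0) * (if q.2 = d then 1 else 0)))
        = (S q.1 q.2 * S c q.2) * (if q.1 = c then 1 else 0) := by
      intro c
      rw [Finset.sum_congr rfl fun d (_ : d ∈ Finset.univ) => show (S q.1 q.2 * S c d)
          * ((if q.1 = c then (1:ℝ) else 0) * (if q.2 = d then 1 else 0))
          = (S q.1 q.2 * S c d * (if q.1 = c then (1:ℝ) else 0)) * (if q.2 = d then 1 else 0)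
        from by ring]
      rw [sum_delta_right (fun d => S q.1 q.2 * S c d * (if q.1 = c then (1:ℝ) else 0)) q.2]
    rw [Finset.sum_congr rfl fun c _ => hc c]
    rw [Finset.sum_congr rfl fun c (_ : c ∈ Finset.univ) => show (S q.1 q.2 * S c q.2)
        * (if q.1 = c then (1:ℝ) else 0)
        = (fun c => S q.1 q.2 * S c q.2) c * (if q.1 = c then (1:ℝ) else 0) from rfl]
    rw [sum_delta_right (fun c => S q.1 q.2 * S c q.2) q.1]
    try ring
  rw [Finset.sum_congr rfl fun q _ => hinner q, Fintype.sum_prod_type]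

lemma trace_G {n T : ℕ} (S R : Matrix (Fin n) (Fin n) ℝ) (hsymm : ∀ a b, S a b = S b a)
    (hRS : R * R = S) (X : Matrix (Fin n) (Fin T) ℝ) :
    (R * X * Xᵀ * R * (R * X * Xᵀ * R)).trace
      = ∑ s : Fin T, ∑ t : Fin T, (∑ a, ∑ b, X a s * S a b * X b t) ^ 2 := by
  have hG : ∀ s t, (Xᵀ * S * X) s t = ∑ a, ∑ b, X a s * S a b * X b t := by
    intro s t
    calc (Xᵀ * S * X) s t = ∑ b, (∑ a, X a s * S a b) * X b t := by
          simp [Matrix.mul_apply, Matrix.transpose_apply]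
      _ = ∑ b, ∑ a, X a s * S a b * X b t := by
          exact Finset.sum_congr rfl fun b _ => Finset.sum_mul _ _ _
      _ = ∑ a, ∑ b, X a s * S a b * X b t := Finset.sum_comm
  have hGsymm : ∀ s t, (Xᵀ * S * X) t s = (Xᵀ * S * X) s t := by
    intro s t
    rw [hG, hG, Finset.sum_comm]
    exact Finset.sum_congr rfl fun a _ => Finset.sum_congr rfl fun b _ => by
      rw [hsymm b a]; ring
  have h1 : R * X * Xᵀ * R * (R * X * Xᵀ * R) = (R * X) * (Xᵀ * S * X * (Xᵀ * R)) := by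
    rw [← hRS]; simp only [Matrix.mul_assoc]
  rw [h1, Matrix.trace_mul_comm]
  have h2 : Xᵀ * S * X * (Xᵀ * R) * (R * X) = (Xᵀ * S * X) * (Xᵀ * S * X) := by
    rw [← hRS]; simp only [Matrix.mul_assoc]
  rw [h2, Matrix.trace]
  calc ∑ s, (Xᵀ * S * X * (Xᵀ * S * X)).diag s
      = ∑ s : Fin T, ∑ t : Fin T, (Xᵀ * S * X) s t * (Xᵀ * S * X) t s :=
        Finset.sum_congr rfl fun s _ => Matrix.mul_apply
    _ = ∑ s : Fin T, ∑ t : Fin T, (∑ a, ∑ b, X a s * S a b * X b t) ^ 2 :=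
        Finset.sum_congr rfl fun s _ => Finset.sum_congr rfl fun t _ => by
          rw [hGsymm s t, hG s t, sq]

lemma quartic_integrable (ξ : Ω → Fin n → ℝ) (hξmeas : Measurable ξ)
    (hmom4 : Integrable (fun ω => (∑ i, ξ ω i ^ 2) ^ 2) μ)
    (S : Matrix (Fin n) (Fin n) ℝ) :
    Integrable (fun ω => (∑ a, ∑ b, ξ ω a * S a b * ξ ω b) ^ 2) μ := by
  have hpt : (fun ω => (∑ a, ∑ b, ξ ω a * S a b * ξ ω b) ^ 2)
      = fun ω => ∑ p : (Fin n × Fin n) × Fin n × Fin n,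
        (S p.1.1 p.1.2 * S p.2.1 p.2.2) * (ξ ω p.1.1 * ξ ω p.1.2 * ξ ω p.2.1 * ξ ω p.2.2) := by
    funext ω
    calc (∑ a, ∑ b, ξ ω a * S a b * ξ ω b) ^ 2
        = (∑ q : Fin n × Fin n, ξ ω q.1 * S q.1 q.2 * ξ ω q.2) ^ 2 := by
          rw [Fintype.sum_prod_type]
      _ = ∑ q : Fin n × Fin n, ∑ r : Fin n × Fin n,
            (ξ ω q.1 * S q.1 q.2 * ξ ω q.2) * (ξ ω r.1 * S r.1 r.2 * ξ ω r.2) := by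
          rw [sq, Finset.sum_mul_sum]
      _ = _ := by
          conv_rhs => rw [Fintype.sum_prod_type]
          exact Finset.sum_congr rfl fun q _ => Finset.sum_congr rfl fun r _ => by ring
  rw [hpt]
  exact integrable_finset_sum _ fun p _ =>
    (integrable4 ξ hξmeas hmom4 p.1.1 p.1.2 p.2.1 p.2.2).const_mul _

lemma offdiag_val (ξ : Ω → Fin n → ℝ) (hξmeas : Measurable ξ)
    (hmom4 : Integrable (fun ω => (∑ i, ξ ω i ^ 2) ^ 2) μ)
    (hcov : ∀ i j : Fin n, ∫ ω, ξ ω i * ξ ω j ∂μ = if i = j then (1 : ℝ) else 0)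
    (S : Matrix (Fin n) (Fin n) ℝ)
    {x y : Ω → Fin n → ℝ} (hxy : IndepFun x y μ)
    (hxi : IdentDistrib x ξ μ μ) (hyi : IdentDistrib y ξ μ μ) :
    Integrable (fun ω => (∑ a, ∑ b, x ω a * S a b * y ω b) ^ 2) μ ∧
    ∫ ω, (∑ a, ∑ b, x ω a * S a b * y ω b) ^ 2 ∂μ = ∑ a, ∑ b, S a b ^ 2 := by
  have hpt : (fun ω => (∑ a, ∑ b, x ω a * S a b * y ω b) ^ 2)
      = fun ω => ∑ p : (Fin n × Fin n) × Fin n × Fin n,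
        (S p.1.1 p.1.2 * S p.2.1 p.2.2) * ((x ω p.1.1 * x ω p.2.1) * (y ω p.1.2 * y ω p.2.2)) := by
    funext ω
    calc (∑ a, ∑ b, x ω a * S a b * y ω b) ^ 2
        = (∑ q : Fin n × Fin n, x ω q.1 * S q.1 q.2 * y ω q.2) ^ 2 := by
          rw [Fintype.sum_prod_type]
      _ = ∑ q : Fin n × Fin n, ∑ r : Fin n × Fin n,
            (x ω q.1 * S q.1 q.2 * y ω q.2) * (x ω r.1 * S r.1 r.2 * y ω r.2) := by
          rw [sq, Finset.sum_mul_sum]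
      _ = _ := by
          conv_rhs => rw [Fintype.sum_prod_type]
          exact Finset.sum_congr rfl fun q _ => Finset.sum_congr rfl fun r _ => by ring
  have hint2 : ∀ a b : Fin n, Integrable (fun ω => ξ ω a * ξ ω b) μ :=
    fun a b => integrable2 ξ hξmeas hmom4 a b
  have hmab : ∀ a b : Fin n, Measurable fun v : Fin n → ℝ => v a * v b :=
    fun a b => (measurable_pi_apply a).mul (measurable_pi_apply b)
  have hxint : ∀ a b : Fin n, Integrable (fun ω => x ω a * x ω b) μ := fun a b =>
    ((hxi.comp (hmab a b)).integrable_iff).mpr (hint2 a b)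
  have hyint : ∀ a b : Fin n, Integrable (fun ω => y ω a * y ω b) μ := fun a b =>
    ((hyi.comp (hmab a b)).integrable_iff).mpr (hint2 a b)
  have hindep2 : ∀ a b c d : Fin n,
      IndepFun (fun ω => x ω a * x ω b) (fun ω => y ω c * y ω d) μ := fun a b c d =>
    hxy.comp (hmab a b) (hmab c d)
  have hprodint : ∀ p : (Fin n × Fin n) × Fin n × Fin n,
      Integrable (fun ω => (x ω p.1.1 * x ω p.2.1) * (y ω p.1.2 * y ω p.2.2)) μ := fun p =>
    (hindep2 p.1.1 p.2.1 p.1.2 p.2.2).integrable_mul (hxint _ _) (hyint _ _)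
  constructor
  · rw [hpt]
    exact integrable_finset_sum _ fun p _ => (hprodint p).const_mul _
  · rw [hpt, integral_finset_sum _ (fun p _ => (hprodint p).const_mul _)]
    have hval : ∀ p : (Fin n × Fin n) × Fin n × Fin n,
        ∫ ω, (S p.1.1 p.1.2 * S p.2.1 p.2.2)
          * ((x ω p.1.1 * x ω p.2.1) * (y ω p.1.2 * y ω p.2.2)) ∂μ
        = (S p.1.1 p.1.2 * S p.2.1 p.2.2) * ((if p.1.1 = p.2.1 then (1:ℝ) else 0)
          * (if p.1.2 = p.2.2 then 1 else 0)) := by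
      intro p
      rw [integral_const_mul]
      have hmul := (hindep2 p.1.1 p.2.1 p.1.2 p.2.2).integral_mul_eq_mul_integral
        (hxint p.1.1 p.2.1).aestronglyMeasurable (hyint p.1.2 p.2.2).aestronglyMeasurable
      rw [show (fun ω => (x ω p.1.1 * x ω p.2.1) * (y ω p.1.2 * y ω p.2.2))
          = (fun ω => x ω p.1.1 * x ω p.2.1) * fun ω => y ω p.1.2 * y ω p.2.2 from rfl, hmul]
      have hx2 : ∫ ω, x ω p.1.1 * x ω p.2.1 ∂μ = if p.1.1 = p.2.1 then (1:ℝ) else 0 := by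
        rw [← hcov p.1.1 p.2.1]
        exact (hxi.comp (hmab p.1.1 p.2.1)).integral_eq
      have hy2 : ∫ ω, y ω p.1.2 * y ω p.2.2 ∂μ = if p.1.2 = p.2.2 then (1:ℝ) else 0 := by
        rw [← hcov p.1.2 p.2.2]
        exact (hyi.comp (hmab p.1.2 p.2.2)).integral_eq
      rw [hx2, hy2]
    rw [Finset.sum_congr rfl fun p _ => hval p, sumE2' S]

end AuxSpec

/-- Second tracial moment of the sample covariance `E = (1/T)·√Σ X Xᵀ √Σ` built from `T`
i.i.d. copies of a rotationally invariant noise vector `ξ` with `E[ξξᵀ] = I` and finite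
fourth norm moment: `E[τ(E²)] = ((T−1)/T + 2γ/T)·τ(Σ²) + (nγ/T)·τ(Σ)²`, where
`γ = E[‖ξ‖⁴]/(n(n+2))`. -/
theorem stmt_5 {Ω : Type*} [MeasurableSpace Ω] (μ : Measure Ω) [IsProbabilityMeasure μ]
    (n T : ℕ) (hn : 1 ≤ n) (hT : 1 ≤ T)
    (S R : Matrix (Fin n) (Fin n) ℝ)
    (hS : S.PosSemidef) (hR : R.PosSemidef) (hRS : R * R = S)
    (ξ : Ω → Fin n → ℝ) (hξmeas : Measurable ξ)
    (hrot : ∀ O : Matrix (Fin n) (Fin n) ℝ, Oᵀ * O = 1 →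
      Measure.map (fun ω => O.mulVec (ξ ω)) μ = Measure.map ξ μ)
    (hcov : ∀ i j : Fin n, ∫ ω, ξ ω i * ξ ω j ∂μ = if i = j then (1 : ℝ) else 0)
    (hmom4 : Integrable (fun ω => (∑ i, ξ ω i ^ 2) ^ 2) μ)
    (X : Ω → Matrix (Fin n) (Fin T) ℝ) (hXmeas : ∀ i t, Measurable fun ω => X ω i t)
    (hindep : iIndepFun
      (fun t ω => fun i => X ω i t) μ)
    (hident : ∀ t : Fin T, IdentDistrib (fun ω => fun i => X ω i t) ξ μ μ)
    (Ecov : Ω → Matrix (Fin n) (Fin n) ℝ)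
    (hE : ∀ ω, Ecov ω = ((T : ℝ)⁻¹) • (R * X ω * (X ω)ᵀ * R))
    (γ : ℝ) (hγ : γ = (∫ ω, (∑ i, ξ ω i ^ 2) ^ 2 ∂μ) / ((n : ℝ) * ((n : ℝ) + 2))) :
    ∫ ω, tau n (Ecov ω * Ecov ω) ∂μ =
      (((T : ℝ) - 1) / (T : ℝ) + 2 * γ / (T : ℝ)) * tau n (S * S) +
        ((n : ℝ) * γ / (T : ℝ)) * (tau n S) ^ 2 := by
  have hsymm : ∀ a b, S a b = S b a := by
    intro a b
    conv_lhs => rw [← hS.1]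
    simp [Matrix.conjTranspose_apply]
  set W : ℝ := ∑ a, ∑ b, S a b ^ 2 with hW
  set V : ℝ := ∑ a, S a a with hV
  set c0 : ℝ := (T:ℝ)⁻¹ * (T:ℝ)⁻¹ * (1 / (n:ℝ)) with hc0
  have hpt : ∀ ω, tau n (Ecov ω * Ecov ω)
      = c0 * ∑ st : Fin T × Fin T, (∑ a, ∑ b, X ω a st.1 * S a b * X ω b st.2) ^ 2 := by
    intro ω
    rw [hE ω, tau, Matrix.smul_mul, Matrix.mul_smul, smul_smul, Matrix.trace_smul,
      trace_G S R hsymm hRS (X ω)]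
    rw [Fintype.sum_prod_type]
    simp only [smul_eq_mul]
    ring
  have hDint : Integrable (fun ω => (∑ a, ∑ b, ξ ω a * S a b * ξ ω b) ^ 2) μ :=
    quartic_integrable ξ hξmeas hmom4 S
  have hu : Measurable fun v : Fin n → ℝ => (∑ a, ∑ b, v a * S a b * v b) ^ 2 := by
    apply Measurable.pow_const
    apply Finset.measurable_sum
    intro a _
    apply Finset.measurable_sum
    intro b _
    exact ((measurable_pi_apply a).mul measurable_const).mul (measurable_pi_apply b)
  set D : ℝ := ∫ ω, (∑ a, ∑ b, ξ ω a * S a b * ξ ω b) ^ 2 ∂μ with hDdef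
  have hD : D = γ * (2 * W + V ^ 2) := by
    rw [hDdef, quartic_form ξ hξmeas hrot hmom4 hn S hsymm, hγ]
  have hFint : ∀ st : Fin T × Fin T,
      Integrable (fun ω => (∑ a, ∑ b, X ω a st.1 * S a b * X ω b st.2) ^ 2) μ := by
    intro st
    by_cases hst : st.1 = st.2
    · have := ((hident st.2).comp hu).integrable_iff.mpr hDint
      rw [hst]
      exact this
    · exact (offdiag_val ξ hξmeas hmom4 hcov S (hindep.indepFun hst)
        (hident st.1) (hident st.2)).1
  have hFval : ∀ st : Fin T × Fin T,
      ∫ ω, (∑ a, ∑ b, X ω a st.1 * S a b * X ω b st.2) ^ 2 ∂μ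
        = if st.1 = st.2 then D else W := by
    intro st
    by_cases hst : st.1 = st.2
    · rw [if_pos hst, hst, hDdef]
      exact ((hident st.2).comp hu).integral_eq
    · rw [if_neg hst]
      exact (offdiag_val ξ hξmeas hmom4 hcov S (hindep.indepFun hst)
        (hident st.1) (hident st.2)).2
  have hmain : ∫ ω, tau n (Ecov ω * Ecov ω) ∂μ
      = c0 * ((T:ℝ) * D + ((T:ℝ) * (T:ℝ) - (T:ℝ)) * W) := by
    rw [show (fun ω => tau n (Ecov ω * Ecov ω)) = fun ω =>
      c0 * ∑ st : Fin T × Fin T, (∑ a, ∑ b, X ω a st.1 * S a b * X ω b st.2) ^ 2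
      from funext hpt]
    rw [integral_const_mul, integral_finset_sum _ (fun st _ => hFint st)]
    rw [Finset.sum_congr rfl fun st _ => hFval st]
    congr 1
    have hterm : ∀ st : Fin T × Fin T, (if st.1 = st.2 then D else W)
        = W + (if st.1 = st.2 then D - W else 0) := by
      intro st; split_ifs <;> ring
    rw [Finset.sum_congr rfl fun st _ => hterm st, Finset.sum_add_distrib, Finset.sum_const]
    have hite : ∑ st : Fin T × Fin T, (if st.1 = st.2 then D - W else (0:ℝ))
        = (T:ℝ) * (D - W) := by
      rw [Fintype.sum_prod_type]
      have : ∀ s : Fin T, (∑ t : Fin T, if s = t then D - W else (0:ℝ)) = D - W := by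
        intro s; rw [Finset.sum_ite_eq]; simp
      rw [Finset.sum_congr rfl fun s _ => this s, Finset.sum_const, Finset.card_univ,
        Fintype.card_fin, nsmul_eq_mul]
    rw [hite, Finset.card_univ, nsmul_eq_mul, Fintype.card_prod, Fintype.card_fin]
    push_cast
    ring
  have htr2 : tau n (S * S) = (1 / (n:ℝ)) * W := by
    rw [tau, Matrix.trace]
    congr 1
    calc ∑ a, (S * S).diag a = ∑ a, ∑ b, S a b * S b a :=
          Finset.sum_congr rfl fun a _ => Matrix.mul_apply
      _ = W := Finset.sum_congr rfl fun a _ => Finset.sum_congr rfl fun b _ => by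
          rw [hsymm b a, sq]
  have htr1 : tau n S = (1 / (n:ℝ)) * V := by
    rw [tau, Matrix.trace, hV]
    rfl
  have hT0 : ((T:ℝ)) ≠ 0 := by
    have : (0:ℝ) < (T:ℝ) := by exact_mod_cast Nat.pos_of_ne_zero (by omega)
    linarith
  have hn0 : ((n:ℝ)) ≠ 0 := by
    have : (0:ℝ) < (n:ℝ) := by exact_mod_cast Nat.pos_of_ne_zero (by omega)
    linarith
  rw [hmain, htr2, htr1, hD, hc0]
  field_simp
  ring
end

section
/- Let n, T ≥ 1 and p > 0. Let Σ be a random symmetric positive semidefinite n×n matrix with E[τ(Σ²)] = 1 + p and E[τ(Σ)²] = 1, independent of the n×T random matrix X whose T columns are i.i.d. copies of a rotationally invariant random vector ξ in ℝⁿ satisfying E[ξξᵀ] = Iₙ and E[‖ξ‖⁴] < ∞. Define E = (1/T)·√Σ X Xᵀ √Σ (where √Σ is the positive semidefinite square root) and γ = E[‖ξ‖⁴]/(n(n+2)). Then E[τ(E²)] = ((T−1)/T)·(1+p) + γ·(n + 2(1+p))/T; consequently, if n, T → ∞ with n/T → q > 0 and γ stays bounded, E[τ(E²)] → 1 + p +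 q·γ (with γ held fixed along the limit). -/
open MeasureTheory ProbabilityTheory Matrix Filter

/-- Matrices carry the product measurable structure. -/
instance matrixMeasurableSpace {m k α : Type*} [MeasurableSpace α] :
    MeasurableSpace (Matrix m k α) :=
  inferInstanceAs (MeasurableSpace (m → k → α))

set_option linter.unusedSectionVars false
set_option linter.unusedVariables false

lemma tau_def (n : ℕ) (A : Matrix (Fin n) (Fin n) ℝ) :
    tau n A = (1 / (n : ℝ)) * A.trace := rfl

section Aux
variable {Ω : Type*} [MeasurableSpace Ω] {μ : Measure Ω} [IsProbabilityMeasure μ]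
  {n : ℕ} {ξ : Ω → Fin n → ℝ}

/-- fourth moment integrand -/
noncomputable def Qmom (μ : Measure Ω) (ξ : Ω → Fin n → ℝ) (i j k l : Fin n) : ℝ :=
  ∫ ω, ξ ω i * ξ ω j * ξ ω k * ξ ω l ∂μ

lemma Qmom_congr (i j k l i' j' k' l' : Fin n)
    (h : ∀ v : Fin n → ℝ, v i * v j * v k * v l = v i' * v j' * v k' * v l') :
    Qmom μ ξ i j k l = Qmom μ ξ i' j' k' l' :=
  integral_congr_ae (Filter.Eventually.of_forall fun ω => h (ξ ω))

lemma meas_prod4 (hξ : Measurable ξ) (i j k l : Fin n) :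
    Measurable fun ω => ξ ω i * ξ ω j * ξ ω k * ξ ω l := by
  have h : ∀ a : Fin n, Measurable fun ω => ξ ω a := fun a => (measurable_pi_apply a).comp hξ
  exact (((h i).mul (h j)).mul (h k)).mul (h l)

lemma pair_abs_le (v : Fin n → ℝ) (a b : Fin n) : |v a * v b| ≤ ∑ i, v i ^ 2 := by
  have h1 : v a ^ 2 ≤ ∑ i, v i ^ 2 :=
    Finset.single_le_sum (f := fun i => v i ^ 2) (fun i _ => sq_nonneg _) (Finset.mem_univ a)
  have h2 : v b ^ 2 ≤ ∑ i, v i ^ 2 :=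
    Finset.single_le_sum (f := fun i => v i ^ 2) (fun i _ => sq_nonneg _) (Finset.mem_univ b)
  rw [abs_le]
  constructor <;> nlinarith [sq_nonneg (v a + v b), sq_nonneg (v a - v b)]

lemma sum_sq_nonneg (v : Fin n → ℝ) : (0:ℝ) ≤ ∑ i, v i ^ 2 :=
  Finset.sum_nonneg fun i _ => sq_nonneg _

lemma integrable_prod4 (hξ : Measurable ξ)
    (hmom4 : Integrable (fun ω => (∑ i, ξ ω i ^ 2) ^ 2) μ) (i j k l : Fin n) :
    Integrable (fun ω => ξ ω i * ξ ω j * ξ ω k * ξ ω l) μ := by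
  refine hmom4.mono (meas_prod4 hξ i j k l).aestronglyMeasurable ?_
  refine Filter.Eventually.of_forall fun ω => ?_
  have hs := sum_sq_nonneg (ξ ω)
  have h1 := pair_abs_le (ξ ω) i j
  have h2 := pair_abs_le (ξ ω) k l
  have habs : |ξ ω i * ξ ω j * ξ ω k * ξ ω l| ≤ (∑ i, ξ ω i ^ 2) ^ 2 := by
    have : |ξ ω i * ξ ω j * ξ ω k * ξ ω l| = |ξ ω i * ξ ω j| * |ξ ω k * ξ ω l| := by
      rw [← abs_mul]; ring_nf
    rw [this, sq]
    exact mul_le_mul h1 h2 (abs_nonneg _) hs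
  rw [Real.norm_eq_abs, Real.norm_eq_abs, abs_of_nonneg (sq_nonneg (∑ i, ξ ω i ^ 2))]
  exact habs

lemma integrable_prod2 (hξ : Measurable ξ)
    (hmom4 : Integrable (fun ω => (∑ i, ξ ω i ^ 2) ^ 2) μ) (i j : Fin n) :
    Integrable (fun ω => ξ ω i * ξ ω j) μ := by
  have hbig : Integrable (fun ω => 1 + (∑ i, ξ ω i ^ 2) ^ 2) μ :=
    (integrable_const 1).add hmom4
  refine hbig.mono (((measurable_pi_apply i).comp hξ).mul
    ((measurable_pi_apply j).comp hξ)).aestronglyMeasurable ?_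
  refine Filter.Eventually.of_forall fun ω => ?_
  have h1 := pair_abs_le (ξ ω) i j
  have hs := sum_sq_nonneg (ξ ω)
  have : |ξ ω i * ξ ω j| ≤ 1 + (∑ i, ξ ω i ^ 2) ^ 2 := by nlinarith
  rw [Real.norm_eq_abs, Real.norm_eq_abs,
    abs_of_nonneg (by nlinarith : (0:ℝ) ≤ 1 + (∑ i, ξ ω i ^ 2) ^ 2)]
  exact this

/-- integral invariance under orthogonal maps -/
lemma rot_int (hξ : Measurable ξ)
    (hrot : ∀ O : Matrix (Fin n) (Fin n) ℝ, Oᵀ * O = 1 →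
      Measure.map (fun ω => O.mulVec (ξ ω)) μ = Measure.map ξ μ)
    (O : Matrix (Fin n) (Fin n) ℝ) (hO : Oᵀ * O = 1)
    (f : (Fin n → ℝ) → ℝ) (hf : Measurable f) :
    ∫ ω, f (O.mulVec (ξ ω)) ∂μ = ∫ ω, f (ξ ω) ∂μ := by
  have hOm : Measurable fun v : Fin n → ℝ => O.mulVec v := by
    apply measurable_pi_lambda
    intro i
    simp only [Matrix.mulVec, dotProduct]
    exact Finset.measurable_sum _ fun j _ => by fun_prop
  have h1 : ∫ ω, f (O.mulVec (ξ ω)) ∂μ = ∫ x, f x ∂(Measure.map (fun ω => O.mulVec (ξ ω)) μ) :=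
    (integral_map (hOm.comp hξ).aemeasurable hf.aestronglyMeasurable).symm
  rw [h1, hrot O hO, integral_map hξ.aemeasurable hf.aestronglyMeasurable]

end Aux

section Mom
variable {Ω : Type*} [MeasurableSpace Ω] {μ : Measure Ω} [IsProbabilityMeasure μ]
  {n : ℕ} {ξ : Ω → Fin n → ℝ}

lemma Qmom_zero (hξ : Measurable ξ)
    (hrot : ∀ O : Matrix (Fin n) (Fin n) ℝ, Oᵀ * O = 1 →
      Measure.map (fun ω => O.mulVec (ξ ω)) μ = Measure.map ξ μ)
    (i j k l : Fin n) (h1 : i ≠ j) (h2 : i ≠ k) (h3 : i ≠ l) :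
    Qmom μ ξ i j k l = 0 := by
  set O := Matrix.diagonal (fun b : Fin n => if b = i then (-1:ℝ) else 1) with hOdef
  have hO : Oᵀ * O = 1 := by
    ext r c
    by_cases hrc : r = c
    · subst hrc
      by_cases hri : r = i <;>
        simp [hOdef, Matrix.diagonal_transpose, Matrix.diagonal_mul_diagonal,
          Matrix.diagonal_apply, Matrix.one_apply, hri]
    · simp [hOdef, Matrix.diagonal_transpose, Matrix.diagonal_mul_diagonal,
        Matrix.diagonal_apply, Matrix.one_apply, hrc]
  have hf : Measurable fun v : Fin n → ℝ => v i * v j * v k * v l :=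
    (((measurable_pi_apply i).mul (measurable_pi_apply j)).mul (measurable_pi_apply k)).mul
      (measurable_pi_apply l)
  have key := rot_int hξ hrot O hO (fun v => v i * v j * v k * v l) hf
  have hmv : ∀ v : Fin n → ℝ,
      (O.mulVec v) i * (O.mulVec v) j * (O.mulVec v) k * (O.mulVec v) l
        = -(v i * v j * v k * v l) := by
    intro v
    have e1 : (O.mulVec v) i = -v i := by simp [hOdef, Matrix.mulVec_diagonal]
    have e2 : (O.mulVec v) j = v j := by simp [hOdef, Matrix.mulVec_diagonal, h1.symm]
    have e3 : (O.mulVec v) k = v k := by simp [hOdef, Matrix.mulVec_diagonal, h2.symm]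
    have e4 : (O.mulVec v) l = v l := by simp [hOdef, Matrix.mulVec_diagonal, h3.symm]
    rw [e1, e2, e3, e4]; ring
  rw [integral_congr_ae (Filter.Eventually.of_forall fun ω => hmv (ξ ω)), integral_neg] at key
  have : Qmom μ ξ i j k l = ∫ ω, ξ ω i * ξ ω j * ξ ω k * ξ ω l ∂μ := rfl
  rw [this]
  linarith [key]

lemma Qmom_perm (hξ : Measurable ξ)
    (hrot : ∀ O : Matrix (Fin n) (Fin n) ℝ, Oᵀ * O = 1 →
      Measure.map (fun ω => O.mulVec (ξ ω)) μ = Measure.map ξ μ)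
    (σ : Equiv.Perm (Fin n)) (i j k l : Fin n) :
    Qmom μ ξ (σ i) (σ j) (σ k) (σ l) = Qmom μ ξ i j k l := by
  set O : Matrix (Fin n) (Fin n) ℝ := Matrix.of fun r c => if σ r = c then 1 else 0 with hOdef
  have hmv : ∀ (v : Fin n → ℝ) (r : Fin n), O.mulVec v r = v (σ r) := by
    intro v r
    simp only [Matrix.mulVec, dotProduct, hOdef, Matrix.of_apply]
    rw [Finset.sum_eq_single (σ r)]
    · simp
    · intro c _ hc; simp [Ne.symm hc]
    · intro h; exact absurd (Finset.mem_univ _) h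
  have hO : Oᵀ * O = 1 := by
    ext c d
    simp only [Matrix.mul_apply, Matrix.transpose_apply, hOdef, Matrix.of_apply,
      Matrix.one_apply]
    rw [Finset.sum_eq_single (σ.symm c)]
    · by_cases h : c = d <;> simp [h, Equiv.apply_symm_apply]
    · intro r _ hr
      have : σ r ≠ c := fun hh => hr (by rw [← hh]; simp)
      simp [this]
    · intro h; exact absurd (Finset.mem_univ _) h
  have hf : Measurable fun v : Fin n → ℝ => v i * v j * v k * v l :=
    (((measurable_pi_apply i).mul (measurable_pi_apply j)).mul (measurable_pi_apply k)).mul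
      (measurable_pi_apply l)
  have key := rot_int hξ hrot O hO (fun v => v i * v j * v k * v l) hf
  simp only [hmv] at key
  exact key

lemma Qmom_diag_eq (hξ : Measurable ξ)
    (hrot : ∀ O : Matrix (Fin n) (Fin n) ℝ, Oᵀ * O = 1 →
      Measure.map (fun ω => O.mulVec (ξ ω)) μ = Measure.map ξ μ)
    (a c : Fin n) : Qmom μ ξ c c c c = Qmom μ ξ a a a a := by
  have := Qmom_perm hξ hrot (Equiv.swap a c) a a a a
  rwa [Equiv.swap_apply_left] at this

lemma Qmom_pair_eq (hξ : Measurable ξ)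
    (hrot : ∀ O : Matrix (Fin n) (Fin n) ℝ, Oᵀ * O = 1 →
      Measure.map (fun ω => O.mulVec (ξ ω)) μ = Measure.map ξ μ)
    {a b c d : Fin n} (hab : a ≠ b) (hcd : c ≠ d) :
    Qmom μ ξ c c d d = Qmom μ ξ a a b b := by
  set τ := Equiv.swap a c with hτ
  set ρ := Equiv.swap (τ b) d with hρ
  have h1 : (τ.trans ρ) a = c := by
    simp only [Equiv.trans_apply, hτ, Equiv.swap_apply_left]
    refine Equiv.swap_apply_of_ne_of_ne ?_ hcd
    intro h
    exact hab (τ.injective (by rw [← h, hτ, Equiv.swap_apply_left]))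
  have h2 : (τ.trans ρ) b = d := by
    simp only [Equiv.trans_apply, hρ, Equiv.swap_apply_left]
  have := Qmom_perm hξ hrot (τ.trans ρ) a a b b
  rwa [h1, h2] at this

end Mom

section Rot45
variable {Ω : Type*} [MeasurableSpace Ω] {μ : Measure Ω} [IsProbabilityMeasure μ]
  {n : ℕ} {ξ : Ω → Fin n → ℝ}

lemma Qmom_four_eq_three (hξ : Measurable ξ)
    (hrot : ∀ O : Matrix (Fin n) (Fin n) ℝ, Oᵀ * O = 1 →
      Measure.map (fun ω => O.mulVec (ξ ω)) μ = Measure.map ξ μ)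
    (hmom4 : Integrable (fun ω => (∑ i, ξ ω i ^ 2) ^ 2) μ)
    {a b : Fin n} (hab : a ≠ b) :
    Qmom μ ξ a a a a = 3 * Qmom μ ξ a a b b := by
  set c : ℝ := (Real.sqrt 2)⁻¹ with hc
  have hc2 : c ^ 2 = 1 / 2 := by
    rw [hc, inv_pow, Real.sq_sqrt (by norm_num : (0:ℝ) ≤ 2)]
    norm_num
  set O : Matrix (Fin n) (Fin n) ℝ := Matrix.of (fun r s =>
    if r = a then (if s = a then c else if s = b then c else 0)
    else if r = b then (if s = a then -c else if s = b then c else 0)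
    else (if r = s then 1 else 0)) with hOdef
  have hOa : ∀ s : Fin n, O a s = if s = a then c else if s = b then c else 0 := by
    intro s; simp [hOdef]
  have hOb : ∀ s : Fin n, O b s = if s = a then -c else if s = b then c else 0 := by
    intro s; simp [hOdef, Ne.symm hab]
  have hOx : ∀ x s : Fin n, x ≠ a → x ≠ b → O x s = if x = s then 1 else 0 := by
    intro x s hxa hxb; simp [hOdef, hxa, hxb]
  have hterm : ∀ r s x : Fin n, O x r * O x s =
      (if x = a then O a r * O a s else 0) + (if x = b then O b r * O b s else 0)
      + (if x = r then (if r = s ∧ ¬ r = a ∧ ¬ r = b then 1 else 0) else 0) := by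
    intro r s x
    by_cases hxa : x = a
    · by_cases hra : r = a
      · simp [hxa, hab, hra]
      · simp [hxa, hab, Ne.symm hra]
    · by_cases hxb : x = b
      · by_cases hrb : r = b
        · simp [hxb, hxa, Ne.symm hab, hrb]
        · simp [hxb, hxa, Ne.symm hab, Ne.symm hrb]
      · rw [hOx x r hxa hxb, hOx x s hxa hxb]
        by_cases hxr : x = r
        · have hra : ¬ r = a := fun h => hxa (hxr.trans h)
          have hrb : ¬ r = b := fun h => hxb (hxr.trans h)
          by_cases hrs : r = s
          · have hsa : ¬ s = a := fun h => hra (hrs.trans h)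
            have hsb : ¬ s = b := fun h => hrb (hrs.trans h)
            simp [hxa, hxb, hxr, hrs, hra, hrb, hsa, hsb]
          · simp [hxa, hxb, hxr, hrs, hra, hrb]
        · simp [hxa, hxb, hxr]
  have hO : Oᵀ * O = 1 := by
    ext r s
    simp only [Matrix.mul_apply, Matrix.transpose_apply, Matrix.one_apply]
    rw [Finset.sum_congr rfl (fun x _ => hterm r s x)]
    rw [Finset.sum_add_distrib, Finset.sum_add_distrib]
    simp only [Finset.sum_ite_eq', Finset.mem_univ, if_pos]
    rw [hOa r, hOa s, hOb r, hOb s]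
    by_cases hra : r = a <;> by_cases hrb : r = b <;>
      by_cases hsa : s = a <;> by_cases hsb : s = b
    all_goals try (exact absurd (hra.symm.trans hrb) hab)
    all_goals try (exact absurd (hsa.symm.trans hsb) hab)
    all_goals simp [hra, hrb, hsa, hsb, hab, Ne.symm hab]
    all_goals try (rw [if_neg (Ne.symm hsa)])
    all_goals try (rw [if_neg (Ne.symm hsb)])
    all_goals try rfl
    all_goals try (exact fun h => hsa h.symm)
    all_goals try (exact fun h => hsb h.symm)
    all_goals linear_combination 2 * hc2
  have hmva : ∀ v : Fin n → ℝ, O.mulVec v a = c * v a + c * v b := by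
    intro v
    have hclaim : ∀ s : Fin n, O a s * v s =
        (if s = a then c * v a else 0) + (if s = b then c * v b else 0) := by
      intro s
      rw [hOa s]
      by_cases hsa : s = a <;> by_cases hsb : s = b
      all_goals try (exact absurd (hsa.symm.trans hsb) hab)
      all_goals simp [hsa, hsb, hab, Ne.symm hab]
    simp only [Matrix.mulVec, dotProduct]
    rw [Finset.sum_congr rfl (fun s _ => hclaim s), Finset.sum_add_distrib]
    simp [Finset.sum_ite_eq']
  have hf : Measurable fun v : Fin n → ℝ => v a * v a * v a * v a :=
    (((measurable_pi_apply a).mul (measurable_pi_apply a)).mul (measurable_pi_apply a)).mul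
      (measurable_pi_apply a)
  have key := rot_int hξ hrot O hO (fun v => v a * v a * v a * v a) hf
  simp only [hmva] at key
  -- expand the left side
  have hexp : ∀ ω, (c * ξ ω a + c * ξ ω b) * (c * ξ ω a + c * ξ ω b) *
      (c * ξ ω a + c * ξ ω b) * (c * ξ ω a + c * ξ ω b) =
      (1/4) * (ξ ω a * ξ ω a * ξ ω a * ξ ω a) + (ξ ω a * ξ ω a * ξ ω a * ξ ω b)
      + (3/2) * (ξ ω a * ξ ω a * ξ ω b * ξ ω b) + (ξ ω a * ξ ω b * ξ ω b * ξ ω b)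
      + (1/4) * (ξ ω b * ξ ω b * ξ ω b * ξ ω b) := by
    intro ω
    linear_combination (c ^ 2 + 1 / 2) * (ξ ω a + ξ ω b) ^ 2 *
      (ξ ω a + ξ ω b) ^ 2 * hc2
  rw [integral_congr_ae (Filter.Eventually.of_forall hexp)] at key
  have I1 : Integrable (fun ω => 1/4 * (ξ ω a * ξ ω a * ξ ω a * ξ ω a)) μ :=
    (integrable_prod4 hξ hmom4 a a a a).const_mul (1/4 : ℝ)
  have I2 := integrable_prod4 hξ hmom4 a a a b
  have I3 : Integrable (fun ω => 3/2 * (ξ ω a * ξ ω a * ξ ω b * ξ ω b)) μ :=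
    (integrable_prod4 hξ hmom4 a a b b).const_mul (3/2 : ℝ)
  have I4 := integrable_prod4 hξ hmom4 a b b b
  have I5 : Integrable (fun ω => 1/4 * (ξ ω b * ξ ω b * ξ ω b * ξ ω b)) μ :=
    (integrable_prod4 hξ hmom4 b b b b).const_mul (1/4 : ℝ)
  have J2 : Integrable (fun ω => 1/4 * (ξ ω a * ξ ω a * ξ ω a * ξ ω a)
      + ξ ω a * ξ ω a * ξ ω a * ξ ω b) μ := I1.add I2
  have J3 : Integrable (fun ω => 1/4 * (ξ ω a * ξ ω a * ξ ω a * ξ ω a)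
      + ξ ω a * ξ ω a * ξ ω a * ξ ω b + 3/2 * (ξ ω a * ξ ω a * ξ ω b * ξ ω b)) μ := J2.add I3
  have J4 : Integrable (fun ω => 1/4 * (ξ ω a * ξ ω a * ξ ω a * ξ ω a)
      + ξ ω a * ξ ω a * ξ ω a * ξ ω b + 3/2 * (ξ ω a * ξ ω a * ξ ω b * ξ ω b)
      + ξ ω a * ξ ω b * ξ ω b * ξ ω b) μ := J3.add I4
  rw [integral_add J4 I5, integral_add J3 I4, integral_add J2 I3, integral_add I1 I2,
    integral_const_mul, integral_const_mul, integral_const_mul] at key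
  have hz1 : Qmom μ ξ a a a b = 0 := by
    rw [Qmom_congr (μ := μ) (ξ := ξ) a a a b b a a a (fun v => by ring)]
    exact Qmom_zero hξ hrot b a a a (Ne.symm hab) (Ne.symm hab) (Ne.symm hab)
  have hz2 : Qmom μ ξ a b b b = 0 :=
    Qmom_zero hξ hrot a b b b hab hab hab
  have hd : Qmom μ ξ b b b b = Qmom μ ξ a a a a := Qmom_diag_eq hξ hrot a b
  have e1 : (∫ ω, ξ ω a * ξ ω a * ξ ω a * ξ ω a ∂μ) = Qmom μ ξ a a a a := rfl
  have e2 : (∫ ω, ξ ω a * ξ ω a * ξ ω a * ξ ω b ∂μ) = Qmom μ ξ a a a b := rfl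
  have e3 : (∫ ω, ξ ω a * ξ ω a * ξ ω b * ξ ω b ∂μ) = Qmom μ ξ a a b b := rfl
  have e4 : (∫ ω, ξ ω a * ξ ω b * ξ ω b * ξ ω b ∂μ) = Qmom μ ξ a b b b := rfl
  have e5 : (∫ ω, ξ ω b * ξ ω b * ξ ω b * ξ ω b ∂μ) = Qmom μ ξ b b b b := rfl
  rw [e1, e2, e3, e4, e5, hz1, hz2, hd] at key
  linarith [key]

end Rot45

section Formula
variable {Ω : Type*} [MeasurableSpace Ω] {μ : Measure Ω} [IsProbabilityMeasure μ]
  {n : ℕ} {ξ : Ω → Fin n → ℝ}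

lemma Qmom_formula (hξ : Measurable ξ)
    (hrot : ∀ O : Matrix (Fin n) (Fin n) ℝ, Oᵀ * O = 1 →
      Measure.map (fun ω => O.mulVec (ξ ω)) μ = Measure.map ξ μ)
    (hmom4 : Integrable (fun ω => (∑ i, ξ ω i ^ 2) ^ 2) μ)
    (hn2 : 2 ≤ n)
    (γ : ℝ) (hγ : γ = (∫ ω, (∑ i, ξ ω i ^ 2) ^ 2 ∂μ) / ((n : ℝ) * ((n : ℝ) + 2)))
    (i j k l : Fin n) :
    Qmom μ ξ i j k l =
      γ * ((if i = j then 1 else 0) * (if k = l then 1 else 0)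
        + (if i = k then 1 else 0) * (if j = l then 1 else 0)
        + (if i = l then 1 else 0) * (if j = k then 1 else 0)) := by
  have h0 : (0:ℕ) < n := by omega
  have h1 : (1:ℕ) < n := by omega
  set a0 : Fin n := ⟨0, h0⟩ with ha0
  set a1 : Fin n := ⟨1, h1⟩ with ha1
  have h01 : a0 ≠ a1 := by simp [ha0, ha1, Fin.ext_iff]
  set m : ℝ := Qmom μ ξ a0 a0 a1 a1 with hm
  have hm4 : ∀ x : Fin n, Qmom μ ξ x x x x = 3 * m := by
    intro x
    rw [Qmom_diag_eq hξ hrot a0 x]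
    exact Qmom_four_eq_three hξ hrot hmom4 h01
  have hpair : ∀ x y : Fin n, x ≠ y → Qmom μ ξ x x y y = m :=
    fun x y hxy => Qmom_pair_eq hξ hrot h01 hxy
  -- identify m with γ
  have hI4 : ∫ ω, (∑ i, ξ ω i ^ 2) ^ 2 ∂μ = ∑ i : Fin n, ∑ j : Fin n, Qmom μ ξ i i j j := by
    have hpt : (fun ω => (∑ i, ξ ω i ^ 2) ^ 2)
        = fun ω => ∑ i : Fin n, ∑ j : Fin n, ξ ω i * ξ ω i * ξ ω j * ξ ω j := by
      funext ω
      rw [sq, Finset.sum_mul_sum]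
      refine Finset.sum_congr rfl fun i _ => Finset.sum_congr rfl fun j _ => by ring
    rw [hpt, integral_finset_sum _
      (fun i _ => integrable_finset_sum _ (fun j _ => integrable_prod4 hξ hmom4 i i j j))]
    exact Finset.sum_congr rfl fun i _ =>
      integral_finset_sum _ (fun j _ => integrable_prod4 hξ hmom4 i i j j)
  have hsum : ∑ i : Fin n, ∑ j : Fin n, Qmom μ ξ i i j j = (n : ℝ) * ((n : ℝ) + 2) * m := by
    have hQ : ∀ i j : Fin n, Qmom μ ξ i i j j = m + (if i = j then 2 * m else 0) := by
      intro i j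
      by_cases h : i = j
      · rw [h, hm4 j, if_pos rfl]; ring
      · rw [hpair i j h, if_neg h]; ring
    simp only [hQ, Finset.sum_add_distrib, Finset.sum_const, Finset.card_univ,
      Fintype.card_fin, Finset.sum_ite_eq, Finset.mem_univ, if_pos, nsmul_eq_mul]
    ring
  have hmγ : m = γ := by
    have hn0 : (n : ℝ) ≠ 0 := Nat.cast_ne_zero.mpr (by omega)
    have hn2' : (n : ℝ) + 2 ≠ 0 := by positivity
    rw [hγ, hI4, hsum]
    field_simp
  -- case analysis
  by_cases hij : i = j
  · subst hij
    by_cases hkl : k = l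
    · subst hkl
      by_cases hik : i = k
      · subst hik
        rw [hm4 i, hmγ]; simp; try ring
      · rw [hpair i k hik, hmγ]; simp [hik]
    · by_cases hik : i = k
      · subst hik
        rw [Qmom_congr (μ := μ) (ξ := ξ) i i i l l i i i (fun v => by ring),
          Qmom_zero hξ hrot l i i i (fun h => hkl h.symm) (fun h => hkl h.symm)
            (fun h => hkl h.symm)]
        simp [hkl]
      · by_cases hil : i = l
        · subst hil
          rw [Qmom_congr (μ := μ) (ξ := ξ) i i k i k i i i (fun v => by ring),
            Qmom_zero hξ hrot k i i i (fun h => hik h.symm) (fun h => hik h.symm)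
              (fun h => hik h.symm)]
          simp [hik, hkl]
        · rw [Qmom_congr (μ := μ) (ξ := ξ) i i k l k i i l (fun v => by ring),
            Qmom_zero hξ hrot k i i l (fun h => hik h.symm) (fun h => hik h.symm)
              (fun h => hkl h)]
          simp [hik, hil, hkl]
  · by_cases hik : i = k
    · subst hik
      by_cases hjl : j = l
      · subst hjl
        rw [Qmom_congr (μ := μ) (ξ := ξ) i j i j i i j j (fun v => by ring),
          hpair i j hij, hmγ]
        simp [hij, Ne.symm hij]
      · by_cases hli : l = i
        · subst hli
          rw [Qmom_congr (μ := μ) (ξ := ξ) l j l l j l l l (fun v => by ring),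
            Qmom_zero hξ hrot j l l l (fun h => hij h.symm) (fun h => hij h.symm)
              (fun h => hij h.symm)]
          simp [hij, Ne.symm hij, hjl]
        · rw [Qmom_congr (μ := μ) (ξ := ξ) i j i l j i i l (fun v => by ring),
            Qmom_zero hξ hrot j i i l (fun h => hij h.symm) (fun h => hij h.symm)
              (fun h => hjl h)]
          simp [hij, hjl, Ne.symm hli]
    · by_cases hil : i = l
      · subst hil
        by_cases hjk : j = k
        · subst hjk
          rw [Qmom_congr (μ := μ) (ξ := ξ) i j j i i i j j (fun v => by ring),
            hpair i j hij, hmγ]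
          simp [hij, hik]
        · rw [Qmom_congr (μ := μ) (ξ := ξ) i j k i j i k i (fun v => by ring),
            Qmom_zero hξ hrot j i k i (fun h => hij h.symm) (fun h => hjk h)
              (fun h => hij h.symm)]
          simp [hij, hik, hjk]
      · rw [Qmom_zero hξ hrot i j k l hij hik hil]
        simp [hij, hik, hil]

end Formula

lemma trace_expand {n T : ℕ} (S : Matrix (Fin n) (Fin n) ℝ) (X : Matrix (Fin n) (Fin T) ℝ) :
    (S * (X * Xᵀ) * (S * (X * Xᵀ))).trace =
      ∑ i, ∑ j, ∑ k, ∑ l, ∑ t, ∑ s,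
        S i k * S j l * (X k t * X j t * (X l s * X i s)) := by
  have hM : ∀ i j : Fin n, (S * (X * Xᵀ)) i j = ∑ k, ∑ t, S i k * (X k t * X j t) := by
    intro i j
    simp only [Matrix.mul_apply, Matrix.transpose_apply, Finset.mul_sum]
  have htr : (S * (X * Xᵀ) * (S * (X * Xᵀ))).trace
      = ∑ i, ∑ j, (S * (X * Xᵀ)) i j * (S * (X * Xᵀ)) j i := by
    simp only [Matrix.trace, Matrix.diag, Matrix.mul_apply]
  rw [htr]
  refine Finset.sum_congr rfl fun i _ => ?_
  refine Finset.sum_congr rfl fun j _ => ?_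
  rw [hM i j, hM j i, Finset.sum_mul_sum]
  refine Finset.sum_congr rfl fun k _ => ?_
  refine Finset.sum_congr rfl fun l _ => ?_
  rw [Finset.sum_mul_sum]
  refine Finset.sum_congr rfl fun t _ => ?_
  refine Finset.sum_congr rfl fun s _ => ?_
  ring

lemma limit_part (p γ : ℝ) (N Tseq : ℕ → ℕ) (q : ℝ)
    (hN : Tendsto (fun j => ((N j : ℝ))) atTop atTop)
    (hT : Tendsto (fun j => ((Tseq j : ℝ))) atTop atTop)
    (hq : Tendsto (fun j => (N j : ℝ) / (Tseq j : ℝ)) atTop (nhds q)) :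
    Tendsto (fun j =>
        (((Tseq j : ℝ) - 1) / (Tseq j : ℝ)) * (1 + p) +
          γ * ((N j : ℝ) + 2 * (1 + p)) / (Tseq j : ℝ))
      atTop (nhds (1 + p + q * γ)) := by
  have hinv : Tendsto (fun j => ((Tseq j : ℝ))⁻¹) atTop (nhds 0) :=
    tendsto_inv_atTop_zero.comp hT
  have hmain : Tendsto (fun j => ((1:ℝ) + p) - (1 + p) * ((Tseq j : ℝ))⁻¹
      + (γ * ((N j : ℝ) / (Tseq j : ℝ)) + γ * (2 * (1 + p)) * ((Tseq j : ℝ))⁻¹))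
      atTop (nhds ((1 + p) - (1 + p) * 0 + (γ * q + γ * (2 * (1 + p)) * 0))) := by
    exact ((tendsto_const_nhds.sub (tendsto_const_nhds.mul hinv)).add
      (((tendsto_const_nhds.mul hq)).add ((tendsto_const_nhds.mul hinv))))
  have heq : ∀ᶠ j in atTop, ((1:ℝ) + p) - (1 + p) * ((Tseq j : ℝ))⁻¹
      + (γ * ((N j : ℝ) / (Tseq j : ℝ)) + γ * (2 * (1 + p)) * ((Tseq j : ℝ))⁻¹)
      = (((Tseq j : ℝ) - 1) / (Tseq j : ℝ)) * (1 + p) +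
          γ * ((N j : ℝ) + 2 * (1 + p)) / (Tseq j : ℝ) := by
    filter_upwards [hT.eventually_ge_atTop 1] with j hj
    have hne : ((Tseq j : ℝ)) ≠ 0 := by linarith
    field_simp
  have := hmain.congr' heq
  convert this using 2
  ring

/-- For a random inverse-Wishart-type population matrix `Σ` with `E[τ(Σ²)] = 1+p` and
`E[τ(Σ)²] = 1`, independent of the noise, the sample covariance satisfies
`E[τ(E²)] = ((T−1)/T)(1+p) + γ(n+2(1+p))/T`; consequently, along `n, T → ∞` with
`n/T → q > 0` and `γ` held fixed, `E[τ(E²)] → 1 + p + qγ`. -/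
theorem stmt_6 {Ω : Type*} [MeasurableSpace Ω] (μ : Measure Ω) [IsProbabilityMeasure μ]
    (n T : ℕ) (hn : 1 ≤ n) (hT : 1 ≤ T) (p : ℝ) (hp : 0 < p)
    (S R : Ω → Matrix (Fin n) (Fin n) ℝ) (hSmeas : Measurable S)
    (hS : ∀ ω, (S ω).PosSemidef) (hR : ∀ ω, (R ω).PosSemidef)
    (hRS : ∀ ω, R ω * R ω = S ω)
    (hS2 : ∫ ω, tau n (S ω * S ω) ∂μ = 1 + p)
    (hS1 : ∫ ω, (tau n (S ω)) ^ 2 ∂μ = 1)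
    (ξ : Ω → Fin n → ℝ) (hξmeas : Measurable ξ)
    (hrot : ∀ O : Matrix (Fin n) (Fin n) ℝ, Oᵀ * O = 1 →
      Measure.map (fun ω => O.mulVec (ξ ω)) μ = Measure.map ξ μ)
    (hcov : ∀ i j : Fin n, ∫ ω, ξ ω i * ξ ω j ∂μ = if i = j then (1 : ℝ) else 0)
    (hmom4 : Integrable (fun ω => (∑ i, ξ ω i ^ 2) ^ 2) μ)
    (X : Ω → Matrix (Fin n) (Fin T) ℝ) (hXmeas : Measurable X)
    (hindep : iIndepFun
      (fun t ω => fun i => X ω i t) μ)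
    (hident : ∀ t : Fin T, IdentDistrib (fun ω => fun i => X ω i t) ξ μ μ)
    (hSX : IndepFun S X μ)
    (Ecov : Ω → Matrix (Fin n) (Fin n) ℝ)
    (hE : ∀ ω, Ecov ω = ((T : ℝ)⁻¹) • (R ω * X ω * (X ω)ᵀ * R ω))
    (γ : ℝ) (hγ : γ = (∫ ω, (∑ i, ξ ω i ^ 2) ^ 2 ∂μ) / ((n : ℝ) * ((n : ℝ) + 2))) :
    (∫ ω, tau n (Ecov ω * Ecov ω) ∂μ =
        (((T : ℝ) - 1) / (T : ℝ)) * (1 + p) + γ * ((n : ℝ) + 2 * (1 + p)) / (T : ℝ)) ∧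
      ∀ (N Tseq : ℕ → ℕ) (q : ℝ), 0 < q →
        Tendsto (fun j => ((N j : ℝ))) atTop atTop →
        Tendsto (fun j => ((Tseq j : ℝ))) atTop atTop →
        Tendsto (fun j => (N j : ℝ) / (Tseq j : ℝ)) atTop (nhds q) →
        Tendsto (fun j =>
            (((Tseq j : ℝ) - 1) / (Tseq j : ℝ)) * (1 + p) +
              γ * ((N j : ℝ) + 2 * (1 + p)) / (Tseq j : ℝ))
          atTop (nhds (1 + p + q * γ)) := by
  refine ⟨?_, fun N Tseq q _ hN hTs hq => limit_part p γ N Tseq q hN hTs hq⟩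
  -- dispose of the degenerate case n = 1
  rcases lt_or_ge n 2 with hn1 | hn2
  · exfalso
    have hn' : n = 1 := by omega
    subst hn'
    have heq : (fun ω => tau 1 (S ω * S ω)) = fun ω => (tau 1 (S ω)) ^ 2 := by
      funext ω
      simp [tau, Matrix.trace, Matrix.diag, Matrix.mul_apply, Fin.sum_univ_one]
      ring
    rw [heq, hS1] at hS2
    linarith
  have hT0 : (T : ℝ) ≠ 0 := Nat.cast_ne_zero.mpr (by omega)
  have hn0 : (n : ℝ) ≠ 0 := Nat.cast_ne_zero.mpr (by omega)
  have hnpos : (0:ℝ) < (n:ℝ) := by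
    have : (0:ℕ) < n := by omega
    exact_mod_cast this
  have hTpos : (0:ℝ) < (T:ℝ) := by
    have : (0:ℕ) < T := by omega
    exact_mod_cast this
  -- measurability of entries
  have hSm : ∀ i k : Fin n, Measurable fun ω => S ω i k :=
    fun i k => (measurable_pi_apply k).comp ((measurable_pi_apply i).comp hSmeas)
  have hXm : ∀ (i : Fin n) (t : Fin T), Measurable fun ω => X ω i t :=
    fun i t => (measurable_pi_apply t).comp ((measurable_pi_apply i).comp hXmeas)
  -- symmetry of S
  have hsym : ∀ ω (i j : Fin n), S ω j i = S ω i j := by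
    intro ω i j
    conv_lhs => rw [← (hS ω).1]
    simp [Matrix.conjTranspose_apply]
  -- integrability coming from the trace hypotheses
  have htau2int : Integrable (fun ω => tau n (S ω * S ω)) μ := by
    by_contra h
    rw [integral_undef h] at hS2; linarith
  have htr2 : ∀ ω, (S ω * S ω).trace = ∑ i, ∑ j, S ω i j * S ω j i := by
    intro ω; simp [Matrix.trace, Matrix.diag, Matrix.mul_apply]
  have hsumSS_int : Integrable (fun ω => ∑ i, ∑ j, S ω i j * S ω j i) μ := by
    refine (htau2int.const_mul (n:ℝ)).congr (Filter.Eventually.of_forall fun ω => ?_)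
    simp only [tau_def]
    rw [htr2 ω]
    field_simp
  have hentInt : ∀ i k j l : Fin n, Integrable (fun ω => S ω i k * S ω j l) μ := by
    intro i k j l
    refine hsumSS_int.mono ((hSm i k).mul (hSm j l)).aestronglyMeasurable
      (Filter.Eventually.of_forall fun ω => ?_)
    have hterm : ∀ a b : Fin n, S ω a b * S ω b a = S ω a b ^ 2 := by
      intro a b; rw [hsym ω a b]; ring
    have hsum_eq : (∑ i, ∑ j, S ω i j * S ω j i) = ∑ i, ∑ j, S ω i j ^ 2 := by
      exact Finset.sum_congr rfl fun a _ => Finset.sum_congr rfl fun b _ => hterm a b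
    have hnn : (0:ℝ) ≤ ∑ i, ∑ j, S ω i j ^ 2 :=
      Finset.sum_nonneg fun a _ => Finset.sum_nonneg fun b _ => sq_nonneg _
    have hle : ∀ a b : Fin n, S ω a b ^ 2 ≤ ∑ i, ∑ j, S ω i j ^ 2 := by
      intro a b
      calc S ω a b ^ 2 ≤ ∑ j, S ω a j ^ 2 :=
            Finset.single_le_sum (f := fun j => S ω a j ^ 2) (fun j _ => sq_nonneg _)
              (Finset.mem_univ b)
        _ ≤ ∑ i, ∑ j, S ω i j ^ 2 :=
            Finset.single_le_sum (f := fun i => ∑ j, S ω i j ^ 2)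
              (fun i _ => Finset.sum_nonneg fun j _ => sq_nonneg _) (Finset.mem_univ a)
    rw [Real.norm_eq_abs, Real.norm_eq_abs, hsum_eq, abs_of_nonneg hnn]
    have h1 := hle i k
    have h2 := hle j l
    rw [abs_le]
    constructor <;> nlinarith [sq_nonneg (S ω i k + S ω j l), sq_nonneg (S ω i k - S ω j l)]
  -- values of the S-integrals
  have hC2 : ∫ ω, (∑ i, ∑ j, S ω i j * S ω j i) ∂μ = (n:ℝ) * (1 + p) := by
    have heq : (fun ω => tau n (S ω * S ω))
        = fun ω => (1/(n:ℝ)) * (∑ i, ∑ j, S ω i j * S ω j i) := by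
      funext ω
      simp only [tau_def]
      rw [htr2 ω]
    rw [heq, integral_const_mul] at hS2
    have := hS2
    field_simp at this
    linarith [this]
  have hC2' : ∫ ω, (∑ i, ∑ k, S ω i k * S ω i k) ∂μ = (n:ℝ) * (1 + p) := by
    rw [← hC2]
    refine integral_congr_ae (Filter.Eventually.of_forall fun ω => ?_)
    refine Finset.sum_congr rfl fun i _ => Finset.sum_congr rfl fun k _ => ?_
    rw [hsym ω i k]
  have hC1 : ∫ ω, (∑ i, S ω i i) * (∑ j, S ω j j) ∂μ = (n:ℝ)^2 := by
    have heq : (fun ω => (tau n (S ω))^2)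
        = fun ω => (1/(n:ℝ))^2 * ((∑ i, S ω i i) * (∑ j, S ω j j)) := by
      funext ω
      simp only [tau_def]
      simp only [Matrix.trace, Matrix.diag]
      ring
    rw [heq, integral_const_mul] at hS1
    have := hS1
    field_simp at this
    simpa only [sq] using this
  -- column facts
  have hm2 : ∀ k j : Fin n, Measurable fun v : Fin n → ℝ => v k * v j :=
    fun k j => (measurable_pi_apply k).mul (measurable_pi_apply j)
  have hm4 : ∀ k j l i : Fin n, Measurable fun v : Fin n → ℝ => v k * v j * (v l * v i) :=
    fun k j l i => ((measurable_pi_apply k).mul (measurable_pi_apply j)).mul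
      ((measurable_pi_apply l).mul (measurable_pi_apply i))
  have hXint2 : ∀ (t : Fin T) (k j : Fin n), Integrable (fun ω => X ω k t * X ω j t) μ := by
    intro t k j
    exact ((hident t).comp (hm2 k j)).integrable_iff.mpr (integrable_prod2 hξmeas hmom4 k j)
  have hXval2 : ∀ (t : Fin T) (k j : Fin n),
      ∫ ω, X ω k t * X ω j t ∂μ = if k = j then 1 else 0 := by
    intro t k j
    have h := ((hident t).comp (hm2 k j)).integral_eq
    exact h.trans (hcov k j)
  have hXint4 : ∀ (t : Fin T) (k j l i : Fin n),
      Integrable (fun ω => X ω k t * X ω j t * (X ω l t * X ω i t)) μ := by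
    intro t k j l i
    refine ((hident t).comp (hm4 k j l i)).integrable_iff.mpr ?_
    exact (integrable_prod4 hξmeas hmom4 k j l i).congr
      (Filter.Eventually.of_forall fun ω => by simp only [Function.comp_apply]; ring)
  have hXval4 : ∀ (t : Fin T) (k j l i : Fin n),
      ∫ ω, X ω k t * X ω j t * (X ω l t * X ω i t) ∂μ = Qmom μ ξ k j l i := by
    intro t k j l i
    have h := ((hident t).comp (hm4 k j l i)).integral_eq
    refine h.trans ?_
    exact integral_congr_ae (Filter.Eventually.of_forall fun ω => by
      simp only [Function.comp_apply]; ring)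
  have hts_indep : ∀ (t s : Fin T), t ≠ s → ∀ k j l i : Fin n,
      IndepFun (fun ω => X ω k t * X ω j t) (fun ω => X ω l s * X ω i s) μ := by
    intro t s hts k j l i
    exact (hindep.indepFun hts).comp (hm2 k j) (hm2 l i)
  have hts_val : ∀ (t s : Fin T), t ≠ s → ∀ k j l i : Fin n,
      ∫ ω, X ω k t * X ω j t * (X ω l s * X ω i s) ∂μ
        = (if k = j then (1:ℝ) else 0) * (if l = i then 1 else 0) := by
    intro t s hts k j l i
    have h : ∫ ω, X ω k t * X ω j t * (X ω l s * X ω i s) ∂μ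
        = (∫ ω, X ω k t * X ω j t ∂μ) * (∫ ω, X ω l s * X ω i s ∂μ) :=
      (hts_indep t s hts k j l i).integral_mul_eq_mul_integral (hXint2 t k j).aestronglyMeasurable (hXint2 s l i).aestronglyMeasurable
    rw [h, hXval2 t k j, hXval2 s l i]
  have hXpartInt : ∀ (t s : Fin T) (k j l i : Fin n),
      Integrable (fun ω => X ω k t * X ω j t * (X ω l s * X ω i s)) μ := by
    intro t s k j l i
    by_cases h : t = s
    · subst h; exact hXint4 t k j l i
    · exact (hts_indep t s h k j l i).integrable_mul (hXint2 t k j) (hXint2 s l i)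
  -- S-X independence factorization
  have hφm : ∀ i k j l : Fin n, Measurable fun M : Matrix (Fin n) (Fin n) ℝ => M i k * M j l :=
    fun i k j l => by fun_prop
  have hψm : ∀ (k j l i : Fin n) (t s : Fin T),
      Measurable fun M : Matrix (Fin n) (Fin T) ℝ => M k t * M j t * (M l s * M i s) :=
    fun k j l i t s => by fun_prop
  have hSXind : ∀ (i k j l : Fin n) (t s : Fin T),
      IndepFun (fun ω => S ω i k * S ω j l)
        (fun ω => X ω k t * X ω j t * (X ω l s * X ω i s)) μ :=
    fun i k j l t s => hSX.comp (hφm i k j l) (hψm k j l i t s)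
  have hbaseInt : ∀ (i j k l : Fin n) (t s : Fin T),
      Integrable (fun ω => S ω i k * S ω j l
        * (X ω k t * X ω j t * (X ω l s * X ω i s))) μ :=
    fun i j k l t s => (hSXind i k j l t s).integrable_mul (hentInt i k j l)
      (hXpartInt t s k j l i)
  have hSXfact : ∀ (i j k l : Fin n) (t s : Fin T),
      ∫ ω, S ω i k * S ω j l * (X ω k t * X ω j t * (X ω l s * X ω i s)) ∂μ
        = (∫ ω, S ω i k * S ω j l ∂μ)
          * (∫ ω, X ω k t * X ω j t * (X ω l s * X ω i s) ∂μ) :=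
    fun i j k l t s => (hSXind i k j l t s).integral_mul_eq_mul_integral
      (hentInt i k j l).aestronglyMeasurable (hXpartInt t s k j l i).aestronglyMeasurable
  -- pointwise trace expansion
  have hEpt : ∀ ω, tau n (Ecov ω * Ecov ω) = (1/(n:ℝ)) * ((T:ℝ)⁻¹ * (T:ℝ)⁻¹) *
      ∑ i, ∑ j, ∑ k, ∑ l, ∑ t, ∑ s,
        S ω i k * S ω j l * (X ω k t * X ω j t * (X ω l s * X ω i s)) := by
    intro ω
    rw [← trace_expand (S ω) (X ω)]
    simp only [tau_def]
    rw [hE ω]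
    have h1 : ((T:ℝ)⁻¹ • (R ω * X ω * (X ω)ᵀ * R ω)) * ((T:ℝ)⁻¹ • (R ω * X ω * (X ω)ᵀ * R ω))
        = ((T:ℝ)⁻¹ * (T:ℝ)⁻¹) • ((R ω * X ω * (X ω)ᵀ * R ω) * (R ω * X ω * (X ω)ᵀ * R ω)) := by
      rw [smul_mul_assoc, mul_smul_comm, smul_smul]
    rw [h1, Matrix.trace_smul, smul_eq_mul]
    have h2 : ((R ω * X ω * (X ω)ᵀ * R ω) * (R ω * X ω * (X ω)ᵀ * R ω)).trace
        = (S ω * (X ω * (X ω)ᵀ) * (S ω * (X ω * (X ω)ᵀ))).trace := by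
      rw [← hRS ω]
      rw [show (R ω * X ω * (X ω)ᵀ * R ω) * (R ω * X ω * (X ω)ᵀ * R ω)
          = (R ω * X ω * (X ω)ᵀ * R ω * (R ω * X ω * (X ω)ᵀ)) * R ω from by simp only [Matrix.mul_assoc],
        Matrix.trace_mul_comm,
        show R ω * (R ω * X ω * (X ω)ᵀ * R ω * (R ω * X ω * (X ω)ᵀ))
          = (R ω * R ω * (X ω * (X ω)ᵀ)) * (R ω * R ω * (X ω * (X ω)ᵀ)) from by simp only [Matrix.mul_assoc]]
    rw [h2]
    ring
  rw [integral_congr_ae (Filter.Eventually.of_forall hEpt), integral_const_mul]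
  -- interchange integral and sums
  have L1 : ∀ (i j k l : Fin n) (t : Fin T), Integrable (fun ω => ∑ s,
      S ω i k * S ω j l * (X ω k t * X ω j t * (X ω l s * X ω i s))) μ :=
    fun i j k l t => integrable_finset_sum _ fun s _ => hbaseInt i j k l t s
  have L2 : ∀ (i j k l : Fin n), Integrable (fun ω => ∑ t, ∑ s,
      S ω i k * S ω j l * (X ω k t * X ω j t * (X ω l s * X ω i s))) μ :=
    fun i j k l => integrable_finset_sum _ fun t _ => L1 i j k l t
  have L3 : ∀ (i j k : Fin n), Integrable (fun ω => ∑ l, ∑ t, ∑ s,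
      S ω i k * S ω j l * (X ω k t * X ω j t * (X ω l s * X ω i s))) μ :=
    fun i j k => integrable_finset_sum _ fun l _ => L2 i j k l
  have L4 : ∀ (i j : Fin n), Integrable (fun ω => ∑ k, ∑ l, ∑ t, ∑ s,
      S ω i k * S ω j l * (X ω k t * X ω j t * (X ω l s * X ω i s))) μ :=
    fun i j => integrable_finset_sum _ fun k _ => L3 i j k
  have L5 : ∀ (i : Fin n), Integrable (fun ω => ∑ j, ∑ k, ∑ l, ∑ t, ∑ s,
      S ω i k * S ω j l * (X ω k t * X ω j t * (X ω l s * X ω i s))) μ :=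
    fun i => integrable_finset_sum _ fun j _ => L4 i j
  have hint : ∫ ω, (∑ i, ∑ j, ∑ k, ∑ l, ∑ t, ∑ s,
      S ω i k * S ω j l * (X ω k t * X ω j t * (X ω l s * X ω i s))) ∂μ
      = ∑ i, ∑ j, ∑ k, ∑ l, ∑ t, ∑ s,
        ∫ ω, S ω i k * S ω j l * (X ω k t * X ω j t * (X ω l s * X ω i s)) ∂μ := by
    rw [integral_finset_sum _ (fun i _ => L5 i)]
    refine Finset.sum_congr rfl fun i _ => ?_
    rw [integral_finset_sum _ (fun j _ => L4 i j)]
    refine Finset.sum_congr rfl fun j _ => ?_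
    rw [integral_finset_sum _ (fun k _ => L3 i j k)]
    refine Finset.sum_congr rfl fun k _ => ?_
    rw [integral_finset_sum _ (fun l _ => L2 i j k l)]
    refine Finset.sum_congr rfl fun l _ => ?_
    rw [integral_finset_sum _ (fun t _ => L1 i j k l t)]
    refine Finset.sum_congr rfl fun t _ => ?_
    rw [integral_finset_sum _ (fun s _ => hbaseInt i j k l t s)]
  rw [hint]
  -- evaluate the base integrals
  set C : Fin n → Fin n → Fin n → Fin n → ℝ :=
    fun i k j l => ∫ ω, S ω i k * S ω j l ∂μ with hCdef
  have hval : ∀ (i j k l : Fin n) (t s : Fin T),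
      ∫ ω, S ω i k * S ω j l * (X ω k t * X ω j t * (X ω l s * X ω i s)) ∂μ
        = C i k j l * (if t = s
            then γ * ((if k = j then 1 else 0) * (if l = i then 1 else 0)
              + (if k = l then 1 else 0) * (if j = i then 1 else 0)
              + (if k = i then 1 else 0) * (if j = l then 1 else 0))
            else (if k = j then 1 else 0) * (if l = i then 1 else 0)) := by
    intro i j k l t s
    rw [hSXfact i j k l t s]
    congr 1
    by_cases h : t = s
    · subst h
      rw [if_pos rfl, hXval4 t k j l i]
      exact Qmom_formula hξmeas hrot hmom4 hn2 γ hγ k j l i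
    · rw [if_neg h]
      exact hts_val t s h k j l i
  -- sum over t, s
  have hts_sum : ∀ A B : ℝ, (∑ t : Fin T, ∑ s : Fin T, if t = s then A else B)
      = (T:ℝ)*(T:ℝ)*B + (T:ℝ)*(A - B) := by
    intro A B
    have h1 : ∀ t : Fin T, (∑ s : Fin T, if t = s then A else B) = (T:ℝ)*B + (A-B) := by
      intro t
      have h2 : ∀ s : Fin T, (if t = s then A else B) = B + (if t = s then A - B else 0) := by
        intro s; by_cases h : t = s <;> simp [h]
      simp only [h2, Finset.sum_add_distrib, Finset.sum_const, Finset.card_univ,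
        Fintype.card_fin, Finset.sum_ite_eq, Finset.mem_univ, if_pos, nsmul_eq_mul]
    simp only [h1, Finset.sum_const, Finset.card_univ, Fintype.card_fin, nsmul_eq_mul]
    ring
  have hinner : ∀ i j k l : Fin n,
      (∑ t : Fin T, ∑ s : Fin T,
        ∫ ω, S ω i k * S ω j l * (X ω k t * X ω j t * (X ω l s * X ω i s)) ∂μ)
      = ((T:ℝ)*(T:ℝ) - (T:ℝ) + (T:ℝ)*γ)
          * ((if k = j then (1:ℝ) else 0) * ((if l = i then (1:ℝ) else 0) * C i k j l))
        + ((T:ℝ)*γ)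
          * ((if k = l then (1:ℝ) else 0) * ((if j = i then (1:ℝ) else 0) * C i k j l))
        + ((T:ℝ)*γ)
          * ((if k = i then (1:ℝ) else 0) * ((if j = l then (1:ℝ) else 0) * C i k j l)) := by
    intro i j k l
    rw [Finset.sum_congr rfl (fun t _ => Finset.sum_congr rfl (fun s _ => hval i j k l t s))]
    rw [show (∑ t : Fin T, ∑ s : Fin T, C i k j l * (if t = s
            then γ * ((if k = j then 1 else 0) * (if l = i then 1 else 0)
              + (if k = l then 1 else 0) * (if j = i then 1 else 0)
              + (if k = i then 1 else 0) * (if j = l then 1 else 0))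
            else (if k = j then 1 else 0) * (if l = i then 1 else 0)))
        = C i k j l * (∑ t : Fin T, ∑ s : Fin T, (if t = s
            then γ * ((if k = j then 1 else 0) * (if l = i then 1 else 0)
              + (if k = l then 1 else 0) * (if j = i then 1 else 0)
              + (if k = i then 1 else 0) * (if j = l then 1 else 0))
            else (if k = j then 1 else 0) * (if l = i then 1 else 0)))
      from by rw [Finset.mul_sum]; exact Finset.sum_congr rfl fun t _ => by rw [Finset.mul_sum]]
    rw [hts_sum]
    ring
  rw [Finset.sum_congr rfl (fun i _ => Finset.sum_congr rfl (fun j _ =>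
    Finset.sum_congr rfl (fun k _ => Finset.sum_congr rfl (fun l _ => hinner i j k l))))]
  -- collapse the delta sums
  have hcol1 : (∑ i, ∑ j, ∑ k, ∑ l : Fin n,
      (if k = j then (1:ℝ) else 0) * ((if l = i then (1:ℝ) else 0) * C i k j l))
      = ∑ i, ∑ j, C i j j i := by
    refine Finset.sum_congr rfl fun i _ => Finset.sum_congr rfl fun j _ => ?_
    have h1 : ∀ k : Fin n, (∑ l : Fin n,
        (if k = j then (1:ℝ) else 0) * ((if l = i then (1:ℝ) else 0) * C i k j l))
        = (if k = j then (1:ℝ) else 0) * C i k j i := by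
      intro k
      rw [← Finset.mul_sum]
      congr 1
      simp only [boole_mul]
      rw [Finset.sum_ite_eq' Finset.univ i (fun l => C i k j l)]
      simp
    rw [Finset.sum_congr rfl (fun k _ => h1 k)]
    simp only [boole_mul]
    rw [Finset.sum_ite_eq' Finset.univ j (fun k => C i k j i)]
    simp
  have hcol2 : (∑ i, ∑ j, ∑ k, ∑ l : Fin n,
      (if k = l then (1:ℝ) else 0) * ((if j = i then (1:ℝ) else 0) * C i k j l))
      = ∑ i, ∑ k, C i k i k := by
    refine Finset.sum_congr rfl fun i _ => ?_
    have h1 : ∀ j k : Fin n, (∑ l : Fin n,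
        (if k = l then (1:ℝ) else 0) * ((if j = i then (1:ℝ) else 0) * C i k j l))
        = (if j = i then (1:ℝ) else 0) * C i k j k := by
      intro j k
      simp only [boole_mul]
      rw [Finset.sum_ite_eq Finset.univ k (fun l => if j = i then C i k j l else 0)]
      simp [boole_mul]
    rw [Finset.sum_congr rfl (fun j _ => Finset.sum_congr rfl (fun k _ => h1 j k))]
    have h2 : ∀ j : Fin n, (∑ k : Fin n, (if j = i then (1:ℝ) else 0) * C i k j k)
        = if j = i then (∑ k : Fin n, C i k j k) else 0 := by
      intro j
      rw [← Finset.mul_sum, boole_mul]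
    rw [Finset.sum_congr rfl (fun j _ => h2 j),
      Finset.sum_ite_eq' Finset.univ i (fun j => ∑ k : Fin n, C i k j k)]
    simp
  have hcol3 : (∑ i, ∑ j, ∑ k, ∑ l : Fin n,
      (if k = i then (1:ℝ) else 0) * ((if j = l then (1:ℝ) else 0) * C i k j l))
      = ∑ i, ∑ j, C i i j j := by
    refine Finset.sum_congr rfl fun i _ => Finset.sum_congr rfl fun j _ => ?_
    have h1 : ∀ k : Fin n, (∑ l : Fin n,
        (if k = i then (1:ℝ) else 0) * ((if j = l then (1:ℝ) else 0) * C i k j l))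
        = (if k = i then (1:ℝ) else 0) * C i k j j := by
      intro k
      rw [← Finset.mul_sum]
      congr 1
      simp only [boole_mul]
      rw [Finset.sum_ite_eq Finset.univ j (fun l => C i k j l)]
      simp
    rw [Finset.sum_congr rfl (fun k _ => h1 k)]
    simp only [boole_mul]
    rw [Finset.sum_ite_eq' Finset.univ i (fun k => C i k j j)]
    simp
  rw [show (∑ i, ∑ j, ∑ k, ∑ l : Fin n,
      (((T:ℝ)*(T:ℝ) - (T:ℝ) + (T:ℝ)*γ)
          * ((if k = j then (1:ℝ) else 0) * ((if l = i then (1:ℝ) else 0) * C i k j l))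
        + ((T:ℝ)*γ)
          * ((if k = l then (1:ℝ) else 0) * ((if j = i then (1:ℝ) else 0) * C i k j l))
        + ((T:ℝ)*γ)
          * ((if k = i then (1:ℝ) else 0) * ((if j = l then (1:ℝ) else 0) * C i k j l))))
      = ((T:ℝ)*(T:ℝ) - (T:ℝ) + (T:ℝ)*γ) * (∑ i, ∑ j, ∑ k, ∑ l : Fin n,
          (if k = j then (1:ℝ) else 0) * ((if l = i then (1:ℝ) else 0) * C i k j l))
        + ((T:ℝ)*γ) * (∑ i, ∑ j, ∑ k, ∑ l : Fin n,
          (if k = l then (1:ℝ) else 0) * ((if j = i then (1:ℝ) else 0) * C i k j l))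
        + ((T:ℝ)*γ) * (∑ i, ∑ j, ∑ k, ∑ l : Fin n,
          (if k = i then (1:ℝ) else 0) * ((if j = l then (1:ℝ) else 0) * C i k j l))
    from by simp only [Finset.sum_add_distrib, Finset.mul_sum]]
  rw [hcol1, hcol2, hcol3]
  -- values of the collapsed sums
  have hU1 : (∑ i, ∑ j, C i j j i) = (n:ℝ) * (1 + p) := by
    rw [← hC2, integral_finset_sum _ (fun i _ => integrable_finset_sum _
      (fun j _ => hentInt i j j i))]
    exact Finset.sum_congr rfl fun i _ =>
      (integral_finset_sum _ (fun j _ => hentInt i j j i)).symm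
  have hU2 : (∑ i, ∑ k, C i k i k) = (n:ℝ) * (1 + p) := by
    rw [← hC2', integral_finset_sum _ (fun i _ => integrable_finset_sum _
      (fun k _ => hentInt i k i k))]
    exact Finset.sum_congr rfl fun i _ =>
      (integral_finset_sum _ (fun k _ => hentInt i k i k)).symm
  have hU3 : (∑ i, ∑ j, C i i j j) = (n:ℝ)^2 := by
    have hpt : (fun ω => (∑ i, S ω i i) * (∑ j, S ω j j))
        = fun ω => ∑ i, ∑ j, S ω i i * S ω j j := by
      funext ω; rw [Finset.sum_mul_sum]
    rw [← hC1, hpt, integral_finset_sum _ (fun i _ => integrable_finset_sum _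
      (fun j _ => hentInt i i j j))]
    exact Finset.sum_congr rfl fun i _ =>
      (integral_finset_sum _ (fun j _ => hentInt i i j j)).symm
  rw [hU1, hU2, hU3]
  field_simp
  ring
end

section
/- Let n ≥ 1, t_out ≥ 1, let Σ be a deterministic symmetric positive semidefinite n×n matrix, and let E_out = (1/t_out)·√Σ X Xᵀ √Σ where the t_out columns of X are i.i.d. copies of a rotationally invariant random vector ξ in ℝⁿ with E[ξξᵀ] = Iₙ and E[‖ξ‖⁴] < ∞. Let V be a random n×n orthogonal matrix independent of X, and define the holdout estimator Ξᴴ = V · Diag(Vᵀ E_out V) · Vᵀ. Then E[τ(Ξᴴ Σ)] = E[τ(Diag(Vᵀ Σ V)²)]. -/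
open MeasureTheory ProbabilityTheory Matrix

/-- `Diag(A)`: the diagonal matrix obtained from `A` by zeroing out off-diagonal entries. -/
def diagPart (n : ℕ) (A : Matrix (Fin n) (Fin n) ℝ) : Matrix (Fin n) (Fin n) ℝ :=
  Matrix.diagonal A.diag

section Aux

variable {n t : ℕ}

lemma trace_vdv (v B S : Matrix (Fin n) (Fin n) ℝ) :
    (v * Matrix.diagonal (vᵀ * B * v).diag * vᵀ * S).trace
      = ∑ i, (vᵀ * B * v) i i * ((vᵀ * S * v) i i) := by
  have h : v * Matrix.diagonal (vᵀ * B * v).diag * vᵀ * S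
      = v * (Matrix.diagonal (vᵀ * B * v).diag * (vᵀ * S)) := by
    simp [Matrix.mul_assoc]
  rw [h, Matrix.trace_mul_comm]
  have h2 : Matrix.diagonal (vᵀ * B * v).diag * (vᵀ * S) * v
      = Matrix.diagonal (vᵀ * B * v).diag * (vᵀ * S * v) := by
    simp [Matrix.mul_assoc]
  rw [h2]
  simp [Matrix.trace, Matrix.diag, Matrix.diagonal_mul]

lemma entry_quad (R : Matrix (Fin n) (Fin n) ℝ) (hRsym : Rᵀ = R)
    (v : Matrix (Fin n) (Fin n) ℝ) (x : Matrix (Fin n) (Fin t) ℝ) (i : Fin n) :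
    (vᵀ * (R * x * xᵀ * R) * v) i i
      = ∑ t', (∑ j, (vᵀ * R) i j * x j t') * (∑ k, (vᵀ * R) i k * x k t') := by
  have h : vᵀ * (R * x * xᵀ * R) * v = (vᵀ * R * x) * (vᵀ * R * x)ᵀ := by
    rw [Matrix.transpose_mul, Matrix.transpose_mul, Matrix.transpose_transpose, hRsym]
    simp [Matrix.mul_assoc]
  rw [h]
  simp only [Matrix.mul_apply, Matrix.transpose_apply]

lemma sum_sq_eq (R S : Matrix (Fin n) (Fin n) ℝ) (hRsym : Rᵀ = R) (hRS : R * R = S)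
    (v : Matrix (Fin n) (Fin n) ℝ) (i : Fin n) :
    (vᵀ * S * v) i i = ∑ j, (vᵀ * R) i j * ((vᵀ * R) i j) := by
  have h : vᵀ * S * v = (vᵀ * R) * (vᵀ * R)ᵀ := by
    rw [Matrix.transpose_mul, Matrix.transpose_transpose, hRsym, ← hRS]
    simp [Matrix.mul_assoc]
  rw [h]
  simp only [Matrix.mul_apply, Matrix.transpose_apply]

end Aux

/-- For the test-set sample covariance `E_out = (1/t_out)·√Σ X Xᵀ √Σ` built from rotationally
invariant noise, and a random orthogonal matrix `V` independent of the test noise: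
the holdout estimator `Ξᴴ = V·Diag(Vᵀ E_out V)·Vᵀ` satisfies
`E[τ(Ξᴴ Σ)] = E[τ(Diag(Vᵀ Σ V)²)]`. -/
theorem stmt_8 {Ω : Type*} [MeasurableSpace Ω] (μ : Measure Ω) [IsProbabilityMeasure μ]
    (n tout : ℕ) (hn : 1 ≤ n) (htout : 1 ≤ tout)
    (S R : Matrix (Fin n) (Fin n) ℝ)
    (hS : S.PosSemidef) (hR : R.PosSemidef) (hRS : R * R = S)
    (ξ : Ω → Fin n → ℝ) (hξmeas : Measurable ξ)
    (hrot : ∀ O : Matrix (Fin n) (Fin n) ℝ, Oᵀ * O = 1 →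
      Measure.map (fun ω => O.mulVec (ξ ω)) μ = Measure.map ξ μ)
    (hcov : ∀ i j : Fin n, ∫ ω, ξ ω i * ξ ω j ∂μ = if i = j then (1 : ℝ) else 0)
    (hmom4 : Integrable (fun ω => (∑ i, ξ ω i ^ 2) ^ 2) μ)
    (X : Ω → Matrix (Fin n) (Fin tout) ℝ) (hXmeas : Measurable X)
    (hindep : iIndepFun
      (fun t ω => fun i => X ω i t) μ)
    (hident : ∀ t : Fin tout, IdentDistrib (fun ω => fun i => X ω i t) ξ μ μ)
    (Eout : Ω → Matrix (Fin n) (Fin n) ℝ)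
    (hEout : ∀ ω, Eout ω = ((tout : ℝ)⁻¹) • (R * X ω * (X ω)ᵀ * R))
    (V : Ω → Matrix (Fin n) (Fin n) ℝ) (hVmeas : Measurable V)
    (hVorth : ∀ ω, (V ω)ᵀ * V ω = 1)
    (hVX : IndepFun V X μ)
    (γ : ℝ) (hγ : γ = (∫ ω, (∑ i, ξ ω i ^ 2) ^ 2 ∂μ) / ((n : ℝ) * ((n : ℝ) + 2)))
    (Xi : Ω → Matrix (Fin n) (Fin n) ℝ)
    (hXi : ∀ ω, Xi ω = V ω * diagPart n ((V ω)ᵀ * Eout ω * V ω) * (V ω)ᵀ) :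
    ∫ ω, tau n ((Xi ω) * S) ∂μ =
      ∫ ω, tau n ((diagPart n ((V ω)ᵀ * S * V ω)) ^ 2) ∂μ := by
  have hRsym : Rᵀ = R := by
    have := hR.1
    exact (by simpa using this : R.IsSymm)
  -- entry measurability
  have hent : ∀ (a b : Fin n), Measurable fun v : Matrix (Fin n) (Fin n) ℝ => v a b :=
    fun a b => (measurable_pi_apply b).comp (measurable_pi_apply a)
  have hentX : ∀ (a : Fin n) (b : Fin tout),
      Measurable fun x : Matrix (Fin n) (Fin tout) ℝ => x a b :=
    fun a b => (measurable_pi_apply b).comp (measurable_pi_apply a)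
  have hcmeas : ∀ i j : Fin n, Measurable fun v : Matrix (Fin n) (Fin n) ℝ => (vᵀ * R) i j := by
    intro i j
    simp only [Matrix.mul_apply, Matrix.transpose_apply]
    exact Finset.measurable_sum _ fun l _ => (hent l i).mul_const _
  have hgmeas : ∀ i : Fin n, Measurable fun v : Matrix (Fin n) (Fin n) ℝ => (vᵀ * S * v) i i := by
    intro i
    simp only [Matrix.mul_apply, Matrix.transpose_apply]
    exact Finset.measurable_sum _ fun a _ =>
      (Finset.measurable_sum _ fun b _ => (hent b i).mul_const _).mul (hent a i)
  -- bounds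
  set CR : ℝ := ∑ a : Fin n, ∑ b : Fin n, |R a b| with hCR
  set CS : ℝ := ∑ a : Fin n, ∑ b : Fin n, |S b a| with hCS
  have hVbd : ∀ ω (a b : Fin n), |V ω a b| ≤ 1 := by
    intro ω a b
    have h1 : ∑ l : Fin n, V ω l b * V ω l b = 1 := by
      have := congrFun (congrFun (hVorth ω) b) b
      simpa [Matrix.mul_apply, Matrix.transpose_apply, Matrix.one_apply] using this
    have h2 : V ω a b * V ω a b ≤ 1 := by
      have h3 := Finset.single_le_sum (f := fun l => V ω l b * V ω l b)
        (fun l _ => mul_self_nonneg _) (Finset.mem_univ a)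
      linarith [h1, h3]
    rw [abs_le]; constructor <;> nlinarith
  have hcbd : ∀ ω (i j : Fin n), |((V ω)ᵀ * R) i j| ≤ CR := by
    intro ω i j
    rw [Matrix.mul_apply]
    calc |∑ l, (V ω)ᵀ i l * R l j| ≤ ∑ l, |(V ω)ᵀ i l * R l j| :=
          Finset.abs_sum_le_sum_abs _ _
      _ ≤ ∑ l, |R l j| := by
          refine Finset.sum_le_sum fun l _ => ?_
          rw [abs_mul, Matrix.transpose_apply]
          have := hVbd ω l i
          nlinarith [abs_nonneg (R l j), abs_nonneg (V ω l i)]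
      _ ≤ CR := by
          refine Finset.sum_le_sum fun l _ => ?_
          exact Finset.single_le_sum (f := fun b => |R l b|) (fun _ _ => abs_nonneg _)
            (Finset.mem_univ j)
  have hgbd : ∀ ω (i : Fin n), |((V ω)ᵀ * S * V ω) i i| ≤ CS := by
    intro ω i
    rw [Matrix.mul_apply]
    calc |∑ a, ((V ω)ᵀ * S) i a * V ω a i| ≤ ∑ a, |((V ω)ᵀ * S) i a * V ω a i| :=
          Finset.abs_sum_le_sum_abs _ _
      _ ≤ ∑ a, ∑ b, |S b a| := by
          refine Finset.sum_le_sum fun a _ => ?_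
          rw [abs_mul]
          have h1 : |((V ω)ᵀ * S) i a| ≤ ∑ b, |S b a| := by
            rw [Matrix.mul_apply]
            calc |∑ b, (V ω)ᵀ i b * S b a| ≤ ∑ b, |(V ω)ᵀ i b * S b a| :=
                  Finset.abs_sum_le_sum_abs _ _
              _ ≤ ∑ b, |S b a| := by
                  refine Finset.sum_le_sum fun b _ => ?_
                  rw [abs_mul, Matrix.transpose_apply]
                  have := hVbd ω b i
                  nlinarith [abs_nonneg (S b a), abs_nonneg (V ω b i)]
          have h2 := hVbd ω a i
          have h3 : (0:ℝ) ≤ ∑ b, |S b a| := Finset.sum_nonneg fun _ _ => abs_nonneg _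
          nlinarith [abs_nonneg (((V ω)ᵀ * S) i a), abs_nonneg (V ω a i)]
      _ = CS := rfl
  have hCRnn : 0 ≤ CR := Finset.sum_nonneg fun _ _ => Finset.sum_nonneg fun _ _ => abs_nonneg _
  have hCSnn : 0 ≤ CS := Finset.sum_nonneg fun _ _ => Finset.sum_nonneg fun _ _ => abs_nonneg _
  -- the V-side factors
  have hFmeas : ∀ i j k : Fin n,
      Measurable fun v : Matrix (Fin n) (Fin n) ℝ =>
        (vᵀ * R) i j * (vᵀ * R) i k * ((vᵀ * S * v) i i) :=
    fun i j k => ((hcmeas i j).mul (hcmeas i k)).mul (hgmeas i)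
  have hFbd : ∀ (ω : Ω) (i j k : Fin n),
      |((V ω)ᵀ * R) i j * ((V ω)ᵀ * R) i k * (((V ω)ᵀ * S * V ω) i i)| ≤ CR * CR * CS := by
    intro ω i j k
    rw [abs_mul, abs_mul]
    have h1 := hcbd ω i j; have h2 := hcbd ω i k; have h3 := hgbd ω i
    have h4 : |((V ω)ᵀ * R) i j| * |((V ω)ᵀ * R) i k| ≤ CR * CR :=
      mul_le_mul h1 h2 (abs_nonneg _) hCRnn
    exact mul_le_mul h4 h3 (abs_nonneg _) (mul_nonneg hCRnn hCRnn)
  have hFint : ∀ i j k : Fin n,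
      Integrable (fun ω => ((V ω)ᵀ * R) i j * ((V ω)ᵀ * R) i k * (((V ω)ᵀ * S * V ω) i i)) μ := by
    intro i j k
    refine Integrable.mono' (integrable_const (CR * CR * CS))
      (((hFmeas i j k).comp hVmeas).aestronglyMeasurable) (ae_of_all _ fun ω => ?_)
    rw [Real.norm_eq_abs]
    exact hFbd ω i j k
  -- the X-side factors
  have hsq : Integrable (fun ω => ∑ i, ξ ω i ^ 2) μ := by
    refine Integrable.mono' (hmom4.add (integrable_const 1))
      ((Finset.measurable_sum _ fun i _ =>
        ((measurable_pi_apply i).comp hξmeas).pow_const 2).aestronglyMeasurable)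
      (ae_of_all _ fun ω => ?_)
    have h0 : (0:ℝ) ≤ ∑ i, ξ ω i ^ 2 := Finset.sum_nonneg fun i _ => sq_nonneg _
    rw [Real.norm_eq_abs, abs_of_nonneg h0]
    simp only [Pi.add_apply]
    nlinarith [sq_nonneg ((∑ i, ξ ω i ^ 2) - 1)]
  have hξjk : ∀ j k : Fin n, Integrable (fun ω => ξ ω j * ξ ω k) μ := by
    intro j k
    refine Integrable.mono' hsq
      ((((measurable_pi_apply j).comp hξmeas).mul
        ((measurable_pi_apply k).comp hξmeas)).aestronglyMeasurable)
      (ae_of_all _ fun ω => ?_)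
    have hj : ξ ω j ^ 2 ≤ ∑ i, ξ ω i ^ 2 :=
      Finset.single_le_sum (f := fun i => ξ ω i ^ 2) (fun i _ => sq_nonneg _) (Finset.mem_univ j)
    have hk : ξ ω k ^ 2 ≤ ∑ i, ξ ω i ^ 2 :=
      Finset.single_le_sum (f := fun i => ξ ω i ^ 2) (fun i _ => sq_nonneg _) (Finset.mem_univ k)
    rw [Real.norm_eq_abs, abs_mul]
    nlinarith [abs_nonneg (ξ ω j), abs_nonneg (ξ ω k), sq_abs (ξ ω j), sq_abs (ξ ω k),
      sq_nonneg (|ξ ω j| - |ξ ω k|)]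
  have hGident : ∀ (j k : Fin n) (t' : Fin tout),
      IdentDistrib (fun ω => X ω j t' * X ω k t') (fun ω => ξ ω j * ξ ω k) μ μ :=
    fun j k t' => (hident t').comp ((measurable_pi_apply j).mul (measurable_pi_apply k))
  have hGint : ∀ (j k : Fin n) (t' : Fin tout),
      Integrable (fun ω => X ω j t' * X ω k t') μ :=
    fun j k t' => (hGident j k t').integrable_iff.mpr (hξjk j k)
  have hGval : ∀ (j k : Fin n) (t' : Fin tout),
      ∫ ω, X ω j t' * X ω k t' ∂μ = if j = k then (1:ℝ) else 0 :=
    fun j k t' => (hGident j k t').integral_eq.trans (hcov j k)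
  have hGmeas : ∀ (j k : Fin n) (t' : Fin tout),
      Measurable fun x : Matrix (Fin n) (Fin tout) ℝ => x j t' * x k t' :=
    fun j k t' => (hentX j t').mul (hentX k t')
  -- the product formula from independence
  have hprod : ∀ (i j k : Fin n) (t' : Fin tout),
      ∫ ω, (((V ω)ᵀ * R) i j * ((V ω)ᵀ * R) i k * (((V ω)ᵀ * S * V ω) i i))
          * (X ω j t' * X ω k t') ∂μ
        = (∫ ω, ((V ω)ᵀ * R) i j * ((V ω)ᵀ * R) i k * (((V ω)ᵀ * S * V ω) i i) ∂μ)
          * (if j = k then (1:ℝ) else 0) := by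
    intro i j k t'
    have h := (hVX.comp (hFmeas i j k) (hGmeas j k t')).integral_fun_mul_eq_mul_integral
      (((hFmeas i j k).comp hVmeas).aestronglyMeasurable)
      (((hGmeas j k t').comp hXmeas).aestronglyMeasurable)
    rw [← hGval j k t']
    exact h
  -- integrability of product terms
  have hFGint : ∀ (i j k : Fin n) (t' : Fin tout),
      Integrable (fun ω =>
        (((V ω)ᵀ * R) i j * ((V ω)ᵀ * R) i k * (((V ω)ᵀ * S * V ω) i i))
          * (X ω j t' * X ω k t')) μ := by
    intro i j k t'
    refine (hGint j k t').bdd_mul (((hFmeas i j k).comp hVmeas).aestronglyMeasurable)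
      (ae_of_all _ fun ω => (?_ : _ ≤ CR * CR * CS))
    rw [Real.norm_eq_abs]
    exact hFbd ω i j k
  -- pointwise form of the LHS integrand
  have hLpt : ∀ ω, tau n (Xi ω * S)
      = ∑ i, ∑ t', ∑ j, ∑ k, ((1 / (n:ℝ)) * (tout:ℝ)⁻¹) *
          ((((V ω)ᵀ * R) i j * ((V ω)ᵀ * R) i k * (((V ω)ᵀ * S * V ω) i i))
            * (X ω j t' * X ω k t')) := by
    intro ω
    rw [tau, hXi, hEout]
    simp only [diagPart]
    rw [trace_vdv]
    simp only [Matrix.mul_smul, Matrix.smul_mul, Matrix.smul_apply, smul_eq_mul]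
    simp only [entry_quad R hRsym]
    simp only [Finset.mul_sum, Finset.sum_mul]
    refine Finset.sum_congr rfl fun i _ => ?_
    refine Finset.sum_congr rfl fun t' _ => ?_
    refine Finset.sum_congr rfl fun j _ => ?_
    refine Finset.sum_congr rfl fun k _ => ?_
    ring
  -- pointwise form of the RHS integrand
  have hRpt : ∀ ω, tau n ((diagPart n ((V ω)ᵀ * S * V ω)) ^ 2)
      = ∑ i, (1 / (n:ℝ)) * ((((V ω)ᵀ * S * V ω) i i) * (((V ω)ᵀ * S * V ω) i i)) := by
    intro ω
    rw [tau, pow_two]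
    simp only [diagPart, Matrix.diagonal_mul_diagonal, Matrix.trace_diagonal, Pi.mul_apply,
      Matrix.diag, Finset.mul_sum]
  -- integrability of g²
  have hGGint : ∀ i : Fin n,
      Integrable (fun ω => (((V ω)ᵀ * S * V ω) i i) * (((V ω)ᵀ * S * V ω) i i)) μ := by
    intro i
    refine Integrable.mono' (integrable_const (CS * CS))
      ((((hgmeas i).comp hVmeas).mul ((hgmeas i).comp hVmeas)).aestronglyMeasurable)
      (ae_of_all _ fun ω => ?_)
    rw [Real.norm_eq_abs, abs_mul]
    have := hgbd ω i
    nlinarith [abs_nonneg (((V ω)ᵀ * S * V ω) i i)]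
  -- collapse the inner sums on the LHS
  have htne : ((tout:ℝ)) ≠ 0 := by positivity
  calc ∫ ω, tau n (Xi ω * S) ∂μ
      = ∫ ω, ∑ i, ∑ t', ∑ j, ∑ k, ((1 / (n:ℝ)) * (tout:ℝ)⁻¹) *
          ((((V ω)ᵀ * R) i j * ((V ω)ᵀ * R) i k * (((V ω)ᵀ * S * V ω) i i))
            * (X ω j t' * X ω k t')) ∂μ := integral_congr_ae (ae_of_all _ hLpt)
    _ = ∑ i, ∑ t', ∑ j, ∑ k, ((1 / (n:ℝ)) * (tout:ℝ)⁻¹) *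
          ∫ ω, ((((V ω)ᵀ * R) i j * ((V ω)ᵀ * R) i k * (((V ω)ᵀ * S * V ω) i i))
            * (X ω j t' * X ω k t')) ∂μ := by
        rw [integral_finset_sum _ (fun i _ => integrable_finset_sum _ fun t' _ =>
          integrable_finset_sum _ fun j _ => integrable_finset_sum _ fun k _ =>
            ((hFGint i j k t').const_mul _))]
        refine Finset.sum_congr rfl fun i _ => ?_
        rw [integral_finset_sum _ (fun t' _ => integrable_finset_sum _ fun j _ =>
          integrable_finset_sum _ fun k _ => ((hFGint i j k t').const_mul _))]
        refine Finset.sum_congr rfl fun t' _ => ?_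
        rw [integral_finset_sum _ (fun j _ =>
          integrable_finset_sum _ fun k _ => ((hFGint i j k t').const_mul _))]
        refine Finset.sum_congr rfl fun j _ => ?_
        rw [integral_finset_sum _ (fun k _ => ((hFGint i j k t').const_mul _))]
        exact Finset.sum_congr rfl fun k _ => integral_const_mul _ _
    _ = ∑ i, ∑ t' : Fin tout, ∑ j, ((1 / (n:ℝ)) * (tout:ℝ)⁻¹) *
          ∫ ω, (((V ω)ᵀ * R) i j * ((V ω)ᵀ * R) i j * (((V ω)ᵀ * S * V ω) i i)) ∂μ := by
        refine Finset.sum_congr rfl fun i _ => Finset.sum_congr rfl fun t' _ =>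
          Finset.sum_congr rfl fun j _ => ?_
        rw [show (∑ k, ((1 / (n:ℝ)) * (tout:ℝ)⁻¹) *
            ∫ ω, ((((V ω)ᵀ * R) i j * ((V ω)ᵀ * R) i k * (((V ω)ᵀ * S * V ω) i i))
              * (X ω j t' * X ω k t')) ∂μ)
          = ∑ k, if j = k then ((1 / (n:ℝ)) * (tout:ℝ)⁻¹) *
              ∫ ω, (((V ω)ᵀ * R) i j * ((V ω)ᵀ * R) i k * (((V ω)ᵀ * S * V ω) i i)) ∂μ
            else 0 from Finset.sum_congr rfl fun k _ => by
              rw [hprod i j k t']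
              by_cases h : j = k <;> simp [h]]
        simp
    _ = ∑ i, (1 / (n:ℝ)) *
          ∫ ω, (((V ω)ᵀ * S * V ω) i i) * (((V ω)ᵀ * S * V ω) i i) ∂μ := by
        refine Finset.sum_congr rfl fun i _ => ?_
        rw [Finset.sum_const, Finset.card_univ, Fintype.card_fin]
        rw [← Finset.mul_sum, ← integral_finset_sum _ (fun j _ => hFint i j j)]
        have hpt : ∀ ω, (∑ j, ((V ω)ᵀ * R) i j * ((V ω)ᵀ * R) i j * (((V ω)ᵀ * S * V ω) i i))
            = (((V ω)ᵀ * S * V ω) i i) * (((V ω)ᵀ * S * V ω) i i) := by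
          intro ω
          rw [← Finset.sum_mul, ← sum_sq_eq R S hRsym hRS (V ω) i]
        rw [integral_congr_ae (ae_of_all _ hpt)]
        rw [nsmul_eq_mul]
        field_simp
    _ = ∫ ω, ∑ i, (1 / (n:ℝ)) * ((((V ω)ᵀ * S * V ω) i i) * (((V ω)ᵀ * S * V ω) i i)) ∂μ := by
        rw [integral_finset_sum _ (fun i _ => (hGGint i).const_mul _)]
        exact Finset.sum_congr rfl fun i _ => (integral_const_mul _ _).symm
    _ = ∫ ω, tau n ((diagPart n ((V ω)ᵀ * S * V ω)) ^ 2) ∂μ :=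
        (integral_congr_ae (ae_of_all _ hRpt)).symm
end
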